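/- arXiv:2504.11141 — 6 statements merged into one kernel-verified Lean document; each statement's English description precedes it below -/
import Mathlib

section
/- Suppose the cost function c satisfies Assumption A, and define q : B × Y × ℝ → [0,∞) by q(s,y,σ) := max{0, inf{t ≥ 0 : c((s,t),y) ≥ σ}} (equivalently, q(s,y,σ) = (c((s,·),y))^{-1}(σ) if σ ≥ c((s,0),y) and q(s,y,σ) = 0 otherwise). Then for any compact interval U ⊂ ℝ, the family of functions { q(·,y,·) restricted to B × U : y ∈ Y } is uniformly bounded and equicontinuous. -/
open MeasureTheory Set Filter Topology

noncomputable section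

/-- The ambient source space `ℝ^{d-1} × ℝ` (with `n = d - 1`). -/
abbrev ESrc (n : ℕ) := EuclideanSpace ℝ (Fin n) × ℝ

/-- The ambient target space `ℝ^d` (with `n = d - 1`). -/
abbrev ETgt (n : ℕ) := EuclideanSpace ℝ (Fin (n + 1))

/-- Assumption A on the cost function `c : X × Y → [0,∞)`, where `X = B × [0,∞)`:
(nonnegativity,) local Lipschitz continuity, strict monotonicity and unboundedness in the
vertical variable, and equicontinuity in the horizontal variable. -/
structure AssumptionA {n : ℕ} (B : Set (EuclideanSpace ℝ (Fin n))) (Y : Set (ETgt n))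
    (c : ESrc n → ETgt n → ℝ) : Prop where
  nonneg : ∀ x ∈ B ×ˢ Ici (0:ℝ), ∀ y ∈ Y, 0 ≤ c x y
  locLip : ∀ z ∈ (B ×ˢ Ici (0:ℝ)) ×ˢ Y, ∃ ε > 0, ∃ K : NNReal,
    LipschitzOnWith K (fun q : ESrc n × ETgt n => c q.1 q.2)
      (((B ×ˢ Ici (0:ℝ)) ×ˢ Y) ∩ Metric.ball z ε)
  strictMonoOn : ∀ s ∈ B, ∀ y ∈ Y, StrictMonoOn (fun t : ℝ => c (s, t) y) (Ici (0:ℝ))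
  unbounded : ∀ s ∈ B, ∀ y ∈ Y, ∀ M : ℝ, ∃ t : ℝ, 0 ≤ t ∧ M ≤ c (s, t) y
  equicontinuous : EquicontinuousOn
    (fun i : ↥(Ici (0:ℝ)) × ↥Y => fun s : EuclideanSpace ℝ (Fin n) =>
      c (s, (i.1 : ℝ)) (i.2 : ETgt n)) B

/-- A probability density on `B` (an element of `P_ac(B)`, identified with its density). -/
structure IsDensity {n : ℕ} (B : Set (EuclideanSpace ℝ (Fin n)))
    (ρ : EuclideanSpace ℝ (Fin n) → ℝ) : Prop where
  measurable : Measurable ρ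
  nonneg : ∀ s, 0 ≤ ρ s
  zero_outside : ∀ s ∉ B, ρ s = 0
  integral_one : ∫ s, ρ s = 1

/-- The region `X_{p̄} = {(s,t) : s ∈ B, 0 ≤ t ≤ p̄(s)}` under the graph of `ρ`. -/
def subgraph {n : ℕ} (B : Set (EuclideanSpace ℝ (Fin n)))
    (ρ : EuclideanSpace ℝ (Fin n) → ℝ) : Set (ESrc n) :=
  {x : ESrc n | x.1 ∈ B ∧ 0 ≤ x.2 ∧ x.2 ≤ ρ x.1}

/-- The measure `μ_{p̄}`: Lebesgue measure restricted to `X_{p̄}`. -/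
def muOf {n : ℕ} (B : Set (EuclideanSpace ℝ (Fin n)))
    (ρ : EuclideanSpace ℝ (Fin n) → ℝ) : Measure (ESrc n) :=
  volume.restrict (subgraph B ρ)

/-- `γ` is a coupling (transport plan) between `μ` and `ν`. -/
def IsCoupling {α β : Type*} [MeasurableSpace α] [MeasurableSpace β]
    (μ : Measure α) (ν : Measure β) (γ : Measure (α × β)) : Prop :=
  γ.map Prod.fst = μ ∧ γ.map Prod.snd = ν

/-- The optimal transport (Kantorovich) cost `T_c(μ,ν)`. -/
def transportCost {α β : Type*} [MeasurableSpace α] [MeasurableSpace β]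
    (c : α → β → ℝ) (μ : Measure α) (ν : Measure β) : ℝ :=
  sInf {r : ℝ | ∃ γ : Measure (α × β), IsCoupling μ ν γ ∧ r = ∫ z, c z.1 z.2 ∂γ}

/-- `γ` is an optimal transport plan from `μ` to `ν` for the cost `c`. -/
def IsOptimalPlan {α β : Type*} [MeasurableSpace α] [MeasurableSpace β]
    (c : α → β → ℝ) (μ : Measure α) (ν : Measure β) (γ : Measure (α × β)) : Prop :=
  IsCoupling μ ν γ ∧ ∀ γ' : Measure (α × β), IsCoupling μ ν γ' →
    ∫ z, c z.1 z.2 ∂γ ≤ ∫ z, c z.1 z.2 ∂γ'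

/-- `T` is an optimal transport map from `μ` to `ν` for the cost `c`. -/
def IsOptimalMap {α β : Type*} [MeasurableSpace α] [MeasurableSpace β]
    (c : α → β → ℝ) (μ : Measure α) (ν : Measure β) (T : α → β) : Prop :=
  Measurable T ∧ μ.map T = ν ∧ ∀ T' : α → β, Measurable T' → μ.map T' = ν →
    ∫ x, c x (T x) ∂μ ≤ ∫ x, c x (T' x) ∂μ

/-- The `c`-transform `ψ^c(x) = min_{y ∈ Y} (c(x,y) - ψ(y))`. -/
def ctransform {α β : Type*} (c : α → β → ℝ) (Y : Set β) (ψ : β → ℝ) (x : α) : ℝ :=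
  sInf ((fun y => c x y - ψ y) '' Y)

/-- The Kantorovich dual functional `K(ψ; μ, ν) = ∫ ψ^c dμ + ∫ ψ dν`. -/
def Kfun {α β : Type*} [MeasurableSpace α] [MeasurableSpace β]
    (c : α → β → ℝ) (Y : Set β) (ψ : β → ℝ) (μ : Measure α) (ν : Measure β) : ℝ :=
  ∫ x, ctransform c Y ψ x ∂μ + ∫ y, ψ y ∂ν

/-- `ψ` is a Kantorovich potential from `μ` to `ν`: a continuous maximiser of the
Kantorovich dual functional over `C(Y)`. -/
def IsKantorovichPotential {α β : Type*} [MeasurableSpace α] [MeasurableSpace β]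
    [TopologicalSpace β] (c : α → β → ℝ) (Y : Set β) (ψ : β → ℝ) (μ : Measure α) (ν : Measure β) : Prop :=
  ContinuousOn ψ Y ∧ ∀ φ : β → ℝ, ContinuousOn φ Y → Kfun c Y φ μ ν ≤ Kfun c Y ψ μ ν

/-- The primal functional `F_ν(p̄) = T_c(μ_{p̄}, ν)`. -/
def Fprimal {n : ℕ} (c : ESrc n → ETgt n → ℝ) (B : Set (EuclideanSpace ℝ (Fin n)))
    (ν : Measure (ETgt n)) (ρ : EuclideanSpace ℝ (Fin n) → ℝ) : ℝ :=
  transportCost c (muOf B ρ) ν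

/-- The dual functional `G_ν(ψ) = inf_{p̄ ∈ P_ac(B)} K(ψ; μ_{p̄}, ν)`. -/
def Gdual {n : ℕ} (c : ESrc n → ETgt n → ℝ) (B : Set (EuclideanSpace ℝ (Fin n)))
    (Y : Set (ETgt n)) (ν : Measure (ETgt n)) (ψ : ETgt n → ℝ) : ℝ :=
  sInf {r : ℝ | ∃ ρ, IsDensity B ρ ∧ r = Kfun c Y ψ (muOf B ρ) ν}

/-- `q(s,y,σ) = max {0, inf {t ≥ 0 : c((s,t),y) ≥ σ}}`, the generalized inverse of
`t ↦ c((s,t),y)`. -/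
def qfun {n : ℕ} (c : ESrc n → ETgt n → ℝ) (s : EuclideanSpace ℝ (Fin n))
    (y : ETgt n) (σ : ℝ) : ℝ :=
  max 0 (sInf {t : ℝ | 0 ≤ t ∧ σ ≤ c (s, t) y})

/-- The candidate optimal surface `p̄_ψ(s) = max_{y ∈ Y} q(s, y, ψ(y) + τ)`. -/
def pbar {n : ℕ} (c : ESrc n → ETgt n → ℝ) (Y : Set (ETgt n)) (ψ : ETgt n → ℝ)
    (τ : ℝ) (s : EuclideanSpace ℝ (Fin n)) : ℝ :=
  sSup ((fun y => qfun c s y (ψ y + τ)) '' Y)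

/-- Under Assumption A, for any compact interval `U = [u₁,u₂] ⊂ ℝ`, the family
`{q(·,y,·)|_{B×U} : y ∈ Y}` is uniformly bounded and equicontinuous. -/
theorem qfun_uniformly_bounded_and_equicontinuous
    (n : ℕ) (hn : 1 ≤ n)
    (B : Set (EuclideanSpace ℝ (Fin n))) (hBc : IsCompact B) (hBint : (interior B).Nonempty)
    (Y : Set (ETgt n)) (hYc : IsCompact Y) (hYne : Y.Nonempty)
    (c : ESrc n → ETgt n → ℝ) (hc : AssumptionA B Y c)
    (u₁ u₂ : ℝ) :
    (∃ M : ℝ, ∀ y ∈ Y, ∀ s ∈ B, ∀ σ ∈ Icc u₁ u₂, qfun c s y σ ≤ M) ∧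
    EquicontinuousOn
      (fun y : ↥Y => fun x : EuclideanSpace ℝ (Fin n) × ℝ => qfun c x.1 (y : ETgt n) x.2)
      (B ×ˢ Icc u₁ u₂) := by
  -- continuity of `c` on its domain
  have hcont : ContinuousOn (fun p : ESrc n × ETgt n => c p.1 p.2)
      ((B ×ˢ Ici (0:ℝ)) ×ˢ Y) := by
    intro z hz
    obtain ⟨ε, hε, K, hK⟩ := hc.locLip z hz
    exact (continuousWithinAt_inter (Metric.ball_mem_nhds z hε)).mp
      (hK.continuousOn z ⟨hz, Metric.mem_ball_self hε⟩)
  obtain ⟨s₁, hs₁⟩ := hBint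
  have hs₁B : s₁ ∈ B := interior_subset hs₁
  -- monotonicity helper
  have hmono : ∀ s ∈ B, ∀ y ∈ Y, ∀ t t' : ℝ, 0 ≤ t → t ≤ t' →
      c (s, t) y ≤ c (s, t') y := fun s hs y hy t t' ht htt' =>
    (hc.strictMonoOn s hs y hy).monotoneOn ht (ht.trans htt') htt'
  -- uniform escape level T
  obtain ⟨T, hT0, hT⟩ : ∃ T : ℝ, 0 ≤ T ∧ ∀ s ∈ B, ∀ y ∈ Y, u₂ + 1 ≤ c (s, T) y := by
    by_contra h
    push_neg at h
    set Z : ℕ → Set (EuclideanSpace ℝ (Fin n) × ETgt n) :=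
      fun m => {p ∈ B ×ˢ Y | c (p.1, (m : ℝ)) p.2 ≤ u₂ + 1} with hZdef
    have hZcont : ∀ m : ℕ, ContinuousOn (fun p : EuclideanSpace ℝ (Fin n) × ETgt n =>
        c (p.1, (m : ℝ)) p.2) (B ×ˢ Y) := by
      intro m
      have : ContinuousOn ((fun p : ESrc n × ETgt n => c p.1 p.2) ∘
          (fun p : EuclideanSpace ℝ (Fin n) × ETgt n => ((p.1, (m : ℝ)), p.2))) (B ×ˢ Y) := by
        apply hcont.comp
        · exact (Continuous.prodMk (continuous_fst.prodMk continuous_const)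
            continuous_snd).continuousOn
        · intro p hp
          exact ⟨⟨hp.1, Set.mem_Ici.mpr (Nat.cast_nonneg m)⟩, hp.2⟩
      exact this
    have hZclosed : ∀ m, IsClosed (Z m) := by
      intro m
      have := (hZcont m).preimage_isClosed_of_isClosed
        (hBc.prod hYc).isClosed (isClosed_Iic (a := u₂ + 1))
      convert this using 1
      rfl
    have hZcomp : ∀ m, IsCompact (Z m) :=
      fun m => (hBc.prod hYc).of_isClosed_subset (hZclosed m) (fun p hp => hp.1)
    have hZne : ∀ m, (Z m).Nonempty := by
      intro m
      obtain ⟨s, hs, y, hy, hlt⟩ := h (m : ℝ) (Nat.cast_nonneg m)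
      exact ⟨(s, y), ⟨⟨hs, hy⟩, hlt.le⟩⟩
    have hZdir : Directed (· ⊇ ·) Z := by
      intro i j
      refine ⟨max i j, fun p hp => ⟨hp.1, ?_⟩, fun p hp => ⟨hp.1, ?_⟩⟩
      · exact le_trans (hmono p.1 hp.1.1 p.2 hp.1.2 _ _ (Nat.cast_nonneg i)
          (by exact_mod_cast le_max_left i j)) hp.2
      · exact le_trans (hmono p.1 hp.1.1 p.2 hp.1.2 _ _ (Nat.cast_nonneg j)
          (by exact_mod_cast le_max_right i j)) hp.2
    obtain ⟨p, hp⟩ := IsCompact.nonempty_iInter_of_directed_nonempty_isCompact_isClosed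
      Z hZdir hZne hZcomp hZclosed
    have hpB : p.1 ∈ B := (Set.mem_iInter.mp hp 0).1.1
    have hpY : p.2 ∈ Y := (Set.mem_iInter.mp hp 0).1.2
    obtain ⟨t, ht0, ht⟩ := hc.unbounded p.1 hpB p.2 hpY (u₂ + 2)
    have hm := (Set.mem_iInter.mp hp ⌈t⌉₊).2
    have : c (p.1, t) p.2 ≤ c (p.1, (⌈t⌉₊ : ℝ)) p.2 :=
      hmono p.1 hpB p.2 hpY t _ ht0 (Nat.le_ceil t)
    linarith
  -- basic properties of qfun
  have hqle : ∀ s, ∀ y, ∀ σ r : ℝ, 0 ≤ r → σ ≤ c (s, r) y → qfun c s y σ ≤ r := by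
    intro s y σ r hr hcr
    have hbdd : BddBelow {t : ℝ | 0 ≤ t ∧ σ ≤ c (s, t) y} := ⟨0, fun t ht => ht.1⟩
    exact max_le hr (csInf_le hbdd ⟨hr, hcr⟩)
  have hqfacts : ∀ s ∈ B, ∀ y ∈ Y, ∀ σ : ℝ, σ ≤ u₂ →
      0 ≤ qfun c s y σ ∧ qfun c s y σ ≤ T ∧ σ ≤ c (s, qfun c s y σ) y := by
    intro s hs y hy σ hσ
    set S : Set ℝ := {t : ℝ | 0 ≤ t ∧ σ ≤ c (s, t) y} with hSdef
    have hbdd : BddBelow S := ⟨0, fun t ht => ht.1⟩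
    have hTS : T ∈ S := ⟨hT0, by linarith [hT s hs y hy]⟩
    have hSne : S.Nonempty := ⟨T, hTS⟩
    have hctt : ContinuousOn (fun t : ℝ => c (s, t) y) (Ici (0:ℝ)) := by
      have : ContinuousOn ((fun p : ESrc n × ETgt n => c p.1 p.2) ∘
          (fun t : ℝ => (((s, t) : ESrc n), y))) (Ici (0:ℝ)) := by
        apply hcont.comp
        · exact (Continuous.prodMk (continuous_const.prodMk continuous_id)
            continuous_const).continuousOn
        · intro t ht
          exact ⟨⟨hs, ht⟩, hy⟩
      exact this
    have hSclosed : IsClosed S := by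
      have := hctt.preimage_isClosed_of_isClosed isClosed_Ici (isClosed_Ici (a := σ))
      convert this using 1
      rfl
    have hmem : sInf S ∈ S := hSclosed.csInf_mem hSne hbdd
    have hq : qfun c s y σ = sInf S := max_eq_right hmem.1
    refine ⟨hq ▸ hmem.1, hq ▸ csInf_le hbdd hTS, ?_⟩
    rw [hq]
    exact hmem.2
  constructor
  · exact ⟨T, fun y hy s hs σ hσ => (hqfacts s hs y hy σ hσ.2).2.1⟩
  -- equicontinuity
  rintro ⟨s₀, σ₀⟩ ⟨hs₀, hσ₀⟩
  intro U hU
  obtain ⟨ε, hε, hεU⟩ := Metric.mem_uniformity_dist.mp hU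
  set δ : ℝ := ε / 2 with hδdef
  have hδ : 0 < δ := by positivity
  -- uniform strict increase modulus m for step δ
  obtain ⟨m, hm, hmod⟩ : ∃ m : ℝ, 0 < m ∧ ∀ s ∈ B, ∀ y ∈ Y, ∀ t ∈ Icc (0:ℝ) T,
      c (s, t) y + m ≤ c (s, t + δ) y := by
    set K : Set (ESrc n × ETgt n) := (B ×ˢ Icc (0:ℝ) T) ×ˢ Y with hKdef
    have hKcomp : IsCompact K := (hBc.prod isCompact_Icc).prod hYc
    obtain ⟨y₁, hy₁⟩ := hYne
    have hKne : K.Nonempty := ⟨((s₁, 0), y₁), ⟨⟨hs₁B, le_refl 0, hT0⟩, hy₁⟩⟩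
    have hKsub : K ⊆ (B ×ˢ Ici (0:ℝ)) ×ˢ Y :=
      fun p hp => ⟨⟨hp.1.1, hp.1.2.1⟩, hp.2⟩
    set g : ESrc n × ETgt n → ℝ :=
      fun p => c (p.1.1, p.1.2 + δ) p.2 - c p.1 p.2 with hgdef
    have hgcont : ContinuousOn g K := by
      apply ContinuousOn.sub
      · have : ContinuousOn ((fun p : ESrc n × ETgt n => c p.1 p.2) ∘
            (fun p : ESrc n × ETgt n => (((p.1.1, p.1.2 + δ) : ESrc n), p.2))) K := by
          apply hcont.comp
          · fun_prop
          · intro p hp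
            refine ⟨⟨hp.1.1, ?_⟩, hp.2⟩
            have := hp.1.2.1
            simp only [Set.mem_Ici]
            linarith
        exact this
      · exact hcont.mono hKsub
    obtain ⟨z, hzK, hzmin⟩ := hKcomp.exists_isMinOn hKne hgcont
    refine ⟨g z, ?_, ?_⟩
    · have := hc.strictMonoOn z.1.1 hzK.1.1 z.2 hzK.2
        (Set.mem_Ici.mpr hzK.1.2.1) (Set.mem_Ici.mpr (by linarith [hzK.1.2.1] : (0:ℝ) ≤ z.1.2 + δ))
        (by linarith : z.1.2 < z.1.2 + δ)
      simpa [hgdef, sub_pos] using this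
    · intro s hs y hy t ht
      have hzle : g z ≤ g ((s, t), y) := hzmin ⟨⟨hs, ht⟩, hy⟩
      simp only [hgdef] at hzle ⊢
      linarith
  -- key one-sided estimate
  have key : ∀ s ∈ B, ∀ s' ∈ B, ∀ y ∈ Y, ∀ σ σ' : ℝ, σ ≤ u₂ → σ' ≤ u₂ →
      σ ≤ σ' + m / 2 → (∀ t : ℝ, 0 ≤ t → |c (s', t) y - c (s, t) y| ≤ m / 2) →
      qfun c s y σ ≤ qfun c s' y σ' + δ := by
    intro s hs s' hs' y hy σ σ' hσu hσ'u hσσ' hnear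
    obtain ⟨hq0, hqT, hqc⟩ := hqfacts s' hs' y hy σ' hσ'u
    set q' : ℝ := qfun c s' y σ' with hq'def
    have hstep : c (s', q') y + m ≤ c (s', q' + δ) y :=
      hmod s' hs' y hy q' ⟨hq0, hqT⟩
    have hnear' := hnear (q' + δ) (by linarith)
    have habs : c (s', q' + δ) y - c (s, q' + δ) y ≤ m / 2 :=
      (abs_le.mp hnear').2
    apply hqle
    · linarith
    · linarith
  -- conclude via the two events
  have hUev : {p : ℝ × ℝ | dist p.1 p.2 < m / 2} ∈ uniformity ℝ :=
    Metric.dist_mem_uniformity (by linarith : (0:ℝ) < m / 2)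
  have hE1 : ∀ᶠ s in 𝓝[B] s₀, ∀ i : ↥(Ici (0:ℝ)) × ↥Y,
      dist (c (s₀, (i.1 : ℝ)) (i.2 : ETgt n)) (c (s, (i.1 : ℝ)) (i.2 : ETgt n)) < m / 2 :=
    hc.equicontinuous s₀ hs₀ _ hUev
  have hE2 : ∀ᶠ σ in 𝓝[Icc u₁ u₂] σ₀, |σ - σ₀| < m / 2 := by
    apply Filter.Eventually.filter_mono nhdsWithin_le_nhds
    have : Set.Ioo (σ₀ - m / 2) (σ₀ + m / 2) ∈ 𝓝 σ₀ :=
      Ioo_mem_nhds (by linarith) (by linarith)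
    filter_upwards [this] with σ hσ
    rw [abs_sub_lt_iff]
    constructor <;> [linarith [hσ.2]; linarith [hσ.1]]
  have hEv : ∀ᶠ x in 𝓝[B ×ˢ Icc u₁ u₂] (s₀, σ₀),
      (∀ i : ↥(Ici (0:ℝ)) × ↥Y,
        dist (c (s₀, (i.1 : ℝ)) (i.2 : ETgt n)) (c (x.1, (i.1 : ℝ)) (i.2 : ETgt n)) < m / 2)
      ∧ |x.2 - σ₀| < m / 2 := by
    rw [nhdsWithin_prod_eq]
    exact hE1.prod_mk hE2
  filter_upwards [hEv, self_mem_nhdsWithin] with x hx hxS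
  intro y
  obtain ⟨hdistc, hdistσ⟩ := hx
  obtain ⟨hxB, hxI⟩ := hxS
  have hnear : ∀ t : ℝ, 0 ≤ t → |c (s₀, t) (y : ETgt n) - c (x.1, t) (y : ETgt n)| ≤ m / 2 := by
    intro t ht
    have := hdistc (⟨t, ht⟩, y)
    rw [Real.dist_eq] at this
    exact this.le
  have hnear' : ∀ t : ℝ, 0 ≤ t → |c (x.1, t) (y : ETgt n) - c (s₀, t) (y : ETgt n)| ≤ m / 2 := by
    intro t ht
    rw [abs_sub_comm]
    exact hnear t ht
  have h1 : qfun c x.1 (y : ETgt n) x.2 ≤ qfun c s₀ (y : ETgt n) σ₀ + δ :=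
    key x.1 hxB s₀ hs₀ y y.2 x.2 σ₀ hxI.2 hσ₀.2
      (by linarith [(abs_sub_lt_iff.mp hdistσ).1]) hnear
  have h2 : qfun c s₀ (y : ETgt n) σ₀ ≤ qfun c x.1 (y : ETgt n) x.2 + δ :=
    key s₀ hs₀ x.1 hxB y y.2 σ₀ x.2 hσ₀.2 hxI.2
      (by linarith [(abs_sub_lt_iff.mp hdistσ).2]) hnear'
  apply hεU
  rw [Real.dist_eq, abs_sub_lt_iff]
  constructor <;> linarith
end
end

section
/- Suppose the cost function c satisfies Assumption A. Then min{ c((s,p),y) : s ∈ B, y ∈ Y } tends to +∞ as p → +∞; that is, for every M > 0 there exists P > 0 such that c((s,p),y) ≥ M for all s ∈ B, all y ∈ Y, and all p ≥ P. -/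
open MeasureTheory Set Filter Topology

noncomputable section

/-- Under Assumption A, `min {c((s,p),y) : s ∈ B, y ∈ Y} → +∞` as `p → +∞`:
for every `M > 0` there exists `P > 0` such that `c((s,p),y) ≥ M` for all `s ∈ B`, `y ∈ Y`
and `p ≥ P`. -/
theorem cost_min_tendsto_atTop
    (n : ℕ) (hn : 1 ≤ n)
    (B : Set (EuclideanSpace ℝ (Fin n))) (hBc : IsCompact B) (hBint : (interior B).Nonempty)
    (Y : Set (ETgt n)) (hYc : IsCompact Y) (hYne : Y.Nonempty)
    (c : ESrc n → ETgt n → ℝ) (hc : AssumptionA B Y c) :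
    ∀ M : ℝ, 0 < M → ∃ P : ℝ, 0 < P ∧ ∀ s ∈ B, ∀ y ∈ Y, ∀ p : ℝ, P ≤ p → M ≤ c (s, p) y := by
  intro M hM
  have hK : IsCompact (B ×ˢ Y) := hBc.prod hYc
  have key : ∀ z ∈ B ×ˢ Y, ∃ t : ℝ, 0 ≤ t ∧ ∃ δ > (0:ℝ),
      ∀ w ∈ B ×ˢ Y, dist w z < δ → M ≤ c (w.1, t) w.2 := by
    rintro ⟨s, y⟩ ⟨hs, hy⟩
    obtain ⟨t, ht0, htM⟩ := hc.unbounded s hs y hy (M + 1)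
    obtain ⟨ε, hε, L, hL⟩ := hc.locLip ((s, t), y) ⟨⟨hs, ht0⟩, hy⟩
    refine ⟨t, ht0, min (ε/2) (1/((L:ℝ)+1)), by positivity, ?_⟩
    rintro ⟨s', y'⟩ ⟨hs', hy'⟩ hd
    have hdeq : dist (((s', t), y') : ESrc n × ETgt n) ((s, t), y)
        = dist ((s', y') : EuclideanSpace ℝ (Fin n) × ETgt n) (s, y) := by
      simp [Prod.dist_eq, dist_self, max_eq_left dist_nonneg]
    have hd' : dist (((s', t), y') : ESrc n × ETgt n) ((s, t), y) < min (ε/2) (1/((L:ℝ)+1)) := by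
      rw [hdeq]; exact hd
    have hmem1 : (((s', t), y') : ESrc n × ETgt n)
        ∈ ((B ×ˢ Ici (0:ℝ)) ×ˢ Y) ∩ Metric.ball ((s, t), y) ε := by
      refine ⟨⟨⟨hs', ht0⟩, hy'⟩, ?_⟩
      have : dist (((s', t), y') : ESrc n × ETgt n) ((s, t), y) < ε/2 :=
        lt_of_lt_of_le hd' (min_le_left _ _)
      exact Metric.mem_ball.mpr (by linarith)
    have hmem2 : (((s, t), y) : ESrc n × ETgt n)
        ∈ ((B ×ˢ Ici (0:ℝ)) ×ˢ Y) ∩ Metric.ball ((s, t), y) ε :=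
      ⟨⟨⟨hs, ht0⟩, hy⟩, Metric.mem_ball_self hε⟩
    have hlip := hL.dist_le_mul _ hmem1 _ hmem2
    have hLnn : (0:ℝ) ≤ (L:ℝ) := L.coe_nonneg
    have hbnd : dist (c (s', t) y') (c (s, t) y) < 1 := by
      have h1 : dist (((s', t), y') : ESrc n × ETgt n) ((s, t), y) < 1/((L:ℝ)+1) :=
        lt_of_lt_of_le hd' (min_le_right _ _)
      have h2 : (L:ℝ) * dist (((s', t), y') : ESrc n × ETgt n) ((s, t), y)
          ≤ (L:ℝ) * (1/((L:ℝ)+1)) :=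
        mul_le_mul_of_nonneg_left h1.le hLnn
      have h3 : (L:ℝ) * (1/((L:ℝ)+1)) < 1 := by
        rw [mul_one_div, div_lt_one (by linarith)]; linarith
      calc dist (c (s', t) y') (c (s, t) y) ≤ (L:ℝ) * _ := hlip
        _ ≤ _ := h2
        _ < 1 := h3
    have := abs_lt.mp (by rwa [Real.dist_eq] at hbnd)
    simp only
    linarith [this.1, this.2]
  choose t ht0 δ hδpos hball using key
  obtain ⟨F, hF⟩ := hK.elim_nhds_subcover' (fun z hz => Metric.ball (z : _) (δ z hz))
    (fun z hz => Metric.ball_mem_nhds _ (hδpos z hz))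
  obtain ⟨s₀, hs₀⟩ := hBint
  have hz₀ : ((s₀, hYne.choose) : EuclideanSpace ℝ (Fin n) × ETgt n) ∈ B ×ˢ Y :=
    ⟨interior_subset hs₀, hYne.choose_spec⟩
  have hFne : F.Nonempty := by
    by_contra h
    rw [Finset.not_nonempty_iff_eq_empty] at h
    have := hF hz₀
    simp [h] at this
  set T : ℝ := F.sup' hFne (fun z => t z.1 z.2) with hT
  have hT0 : 0 ≤ T := by
    obtain ⟨z, hz⟩ := hFne
    exact le_trans (ht0 z.1 z.2) (Finset.le_sup' (fun w => t w.1 w.2) hz)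
  refine ⟨T + 1, by linarith, ?_⟩
  intro s hs y hy p hp
  have hsy : ((s, y) : EuclideanSpace ℝ (Fin n) × ETgt n) ∈ B ×ˢ Y := ⟨hs, hy⟩
  obtain ⟨z, hzF, hzball⟩ := Set.mem_iUnion₂.mp (hF hsy)
  have hMc : M ≤ c (s, t z.1 z.2) y := hball z.1 z.2 (s, y) hsy (Metric.mem_ball.mp hzball)
  have htT : t z.1 z.2 ≤ T := Finset.le_sup' (fun w => t w.1 w.2) hzF
  have hmono := (hc.strictMonoOn s hs y hy).monotoneOn
  have hpt : t z.1 z.2 ≤ p := by linarith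
  have := hmono (show t z.1 z.2 ∈ Ici (0:ℝ) from ht0 z.1 z.2)
    (show p ∈ Ici (0:ℝ) from by simp only [mem_Ici]; linarith) hpt
  simp only at this
  linarith
end
end

section
/- Suppose the cost function c satisfies Assumption A. Then for each ψ ∈ C(Y) there exists a unique constant τ_ψ ∈ ℝ such that the function p̄_ψ : B → [0,∞) defined by p̄_ψ(s) := max_{y∈Y} q(s, y, ψ(y) + τ_ψ) is a probability density on B (i.e. ∫_B p̄_ψ(s) ds = 1). Moreover, the set S := { p̄_ψ : ψ ∈ C(Y) } of continuous functions on B is uniformly bounded and equicontinuous. -/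
open MeasureTheory Set Filter Topology

noncomputable section

open Uniformity

section Aux
variable {n : ℕ} {B : Set (EuclideanSpace ℝ (Fin n))} {Y : Set (ETgt n)}
  {c : ESrc n → ETgt n → ℝ} (hc : AssumptionA B Y c)
include hc

def Sset (c : ESrc n → ETgt n → ℝ) (s : EuclideanSpace ℝ (Fin n)) (y : ETgt n) (σ : ℝ) :
    Set ℝ := {t : ℝ | 0 ≤ t ∧ σ ≤ c (s, t) y}

lemma Sset_nonempty {s y σ} (hs : s ∈ B) (hy : y ∈ Y) : (Sset c s y σ).Nonempty :=
  hc.unbounded s hs y hy σ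

omit hc in
lemma Sset_bddBelow {s y σ} : BddBelow (Sset c s y σ) := ⟨0, fun _ ht => ht.1⟩

lemma cont_c : ContinuousOn (fun z : ESrc n × ETgt n => c z.1 z.2) ((B ×ˢ Ici (0:ℝ)) ×ˢ Y) := by
  intro z hz
  obtain ⟨ε, hε, K, hK⟩ := hc.locLip z hz
  have h1 : ContinuousWithinAt (fun z : ESrc n × ETgt n => c z.1 z.2)
      (((B ×ˢ Ici (0:ℝ)) ×ˢ Y) ∩ Metric.ball z ε) z :=
    hK.continuousOn.continuousWithinAt ⟨hz, Metric.mem_ball_self hε⟩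
  exact (continuousWithinAt_inter (Metric.ball_mem_nhds z hε)).mp h1

lemma cont_t {s y} (hs : s ∈ B) (hy : y ∈ Y) :
    ContinuousOn (fun t : ℝ => c (s, t) y) (Ici (0:ℝ)) := by
  have : ContinuousOn (fun t : ℝ => ((((s, t) : ESrc n), y) : ESrc n × ETgt n)) (Ici 0) := by
    fun_prop
  exact (cont_c hc).comp this (fun t ht => ⟨⟨hs, ht⟩, hy⟩)

lemma cmono {s y} (hs : s ∈ B) (hy : y ∈ Y) :
    MonotoneOn (fun t : ℝ => c (s, t) y) (Ici (0:ℝ)) :=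
  (hc.strictMonoOn s hs y hy).monotoneOn

lemma Sset_closed {s y σ} (hs : s ∈ B) (hy : y ∈ Y) : IsClosed (Sset c s y σ) := by
  have h : Sset c s y σ = Ici (0:ℝ) ∩ (fun t : ℝ => c (s, t) y) ⁻¹' Ici σ := by
    ext t; simp [Sset]
  rw [h]
  exact (cont_t hc hs hy).preimage_isClosed_of_isClosed isClosed_Ici isClosed_Ici

lemma qfun_eq_sInf {s y σ} (hs : s ∈ B) (hy : y ∈ Y) :
    qfun c s y σ = sInf (Sset c s y σ) := by
  have h0 : (0:ℝ) ≤ sInf (Sset c s y σ) :=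
    le_csInf (Sset_nonempty hc hs hy) (fun t ht => ht.1)
  exact max_eq_right h0

lemma qfun_mem {s y σ} (hs : s ∈ B) (hy : y ∈ Y) : qfun c s y σ ∈ Sset c s y σ := by
  rw [qfun_eq_sInf hc hs hy]
  exact (Sset_closed hc hs hy).csInf_mem (Sset_nonempty hc hs hy) Sset_bddBelow

lemma qfun_nonneg {s y σ} (hs : s ∈ B) (hy : y ∈ Y) : 0 ≤ qfun c s y σ :=
  (qfun_mem hc hs hy).1

lemma le_c_qfun {s y σ} (hs : s ∈ B) (hy : y ∈ Y) : σ ≤ c (s, qfun c s y σ) y :=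
  (qfun_mem hc hs hy).2

lemma qfun_le {s y σ T} (hs : s ∈ B) (hy : y ∈ Y) (hT : 0 ≤ T) (h : σ ≤ c (s, T) y) :
    qfun c s y σ ≤ T := by
  rw [qfun_eq_sInf hc hs hy]; exact csInf_le Sset_bddBelow ⟨hT, h⟩

lemma le_qfun {s y σ T} (hs : s ∈ B) (hy : y ∈ Y) (hT : 0 ≤ T) (h : c (s, T) y ≤ σ) :
    T ≤ qfun c s y σ := by
  rw [qfun_eq_sInf hc hs hy]
  refine le_csInf (Sset_nonempty hc hs hy) (fun t ht => ?_)
  by_contra hlt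
  push_neg at hlt
  exact absurd ht.2 (not_le.mpr (lt_of_lt_of_le
    ((hc.strictMonoOn s hs y hy) ht.1 hT hlt) h))

lemma c_qfun_le {s y σ T} (hs : s ∈ B) (hy : y ∈ Y) (hT : 0 ≤ T) (h : qfun c s y σ ≤ T) :
    σ ≤ c (s, T) y :=
  le_trans (le_c_qfun hc hs hy) (cmono hc hs hy (qfun_nonneg hc hs hy) hT h)

lemma c_qfun_eq {s y σ} (hs : s ∈ B) (hy : y ∈ Y) (hq : 0 < qfun c s y σ) :
    c (s, qfun c s y σ) y = σ := by
  refine le_antisymm ?_ (le_c_qfun hc hs hy)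
  set q := qfun c s y σ with hqd
  have hq0 : 0 ≤ q := qfun_nonneg hc hs hy
  have hlt : ∀ t ∈ Ico (0:ℝ) q, c (s, t) y < σ := by
    intro t ht
    by_contra hge
    push_neg at hge
    have := csInf_le (Sset_bddBelow (c := c) (s := s) (y := y) (σ := σ)) ⟨ht.1, hge⟩
    rw [← qfun_eq_sInf hc hs hy] at this
    exact absurd ht.2 (not_lt.mpr this)
  have hne : (𝓝[Ico (0:ℝ) q] q).NeBot := by
    rw [← mem_closure_iff_nhdsWithin_neBot, closure_Ico (ne_of_lt hq)]
    exact ⟨hq0, le_refl q⟩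
  have htend : Tendsto (fun t : ℝ => c (s, t) y) (𝓝[Ico (0:ℝ) q] q) (𝓝 (c (s, q) y)) :=
    ((cont_t hc hs hy q hq0).mono Ico_subset_Ici_self).tendsto
  exact le_of_tendsto htend (eventually_nhdsWithin_of_forall (fun t ht => le_of_lt (hlt t ht)))

lemma qfun_mono_sigma {s y} (hs : s ∈ B) (hy : y ∈ Y) : Monotone (qfun c s y) := by
  intro σ σ' hσ
  rw [qfun_eq_sInf hc hs hy, qfun_eq_sInf hc hs hy]
  exact csInf_le_csInf Sset_bddBelow (Sset_nonempty hc hs hy)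
    (fun t ht => ⟨ht.1, le_trans hσ ht.2⟩)


lemma cbound (hBc : IsCompact B) (hYc : IsCompact Y) (m : ℝ) :
    ∃ C, 0 ≤ C ∧ ∀ s ∈ B, ∀ y ∈ Y, ∀ t : ℝ, 0 ≤ t → t ≤ m → c (s, t) y ≤ C := by
  have hK : IsCompact (((B ×ˢ Icc (0:ℝ) m) ×ˢ Y : Set (ESrc n × ETgt n))) :=
    ((hBc.prod isCompact_Icc).prod hYc)
  have hsub : ((B ×ˢ Icc (0:ℝ) m) ×ˢ Y : Set (ESrc n × ETgt n)) ⊆ (B ×ˢ Ici (0:ℝ)) ×ˢ Y :=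
    prod_mono_left (prod_mono_right Icc_subset_Ici_self)
  obtain ⟨C0, hC0⟩ := hK.exists_bound_of_continuousOn ((cont_c hc).mono hsub)
  refine ⟨max C0 0, le_max_right _ _, fun s hs y hy t ht htm => ?_⟩
  have := hC0 ((s, t), y) ⟨⟨hs, ht, htm⟩, hy⟩
  exact le_trans (le_trans (le_abs_self _) this) (le_max_left _ _)

lemma qbound (hBc : IsCompact B) (hYc : IsCompact Y) (C : ℝ) :
    ∃ T, 0 ≤ T ∧ ∀ s ∈ B, ∀ y ∈ Y, ∀ σ : ℝ, σ ≤ C → qfun c s y σ ≤ T := by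
  classical
  set f : ℕ → EuclideanSpace ℝ (Fin n) × ETgt n → ℝ := fun k p => c (p.1, (k:ℝ)) p.2 with hf
  have hfc : ∀ k : ℕ, ContinuousOn (f k) (B ×ˢ Y) := by
    intro k
    have hmap : ContinuousOn (fun p : EuclideanSpace ℝ (Fin n) × ETgt n =>
        (((p.1, (k:ℝ)) : ESrc n), p.2)) (B ×ˢ Y) := by fun_prop
    exact (cont_c hc).comp hmap (fun p hp => ⟨⟨hp.1, mem_Ici.mpr (Nat.cast_nonneg k)⟩, hp.2⟩)
  have hopen : ∀ k : ℕ, ∃ u : Set (EuclideanSpace ℝ (Fin n) × ETgt n), IsOpen u ∧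
      f k ⁻¹' Ioi C ∩ (B ×ˢ Y) = u ∩ (B ×ˢ Y) := by
    intro k
    exact (continuousOn_iff'.mp (hfc k)) (Ioi C) isOpen_Ioi
  choose u hu hueq using hopen
  have hcover : (B ×ˢ Y : Set _) ⊆ ⋃ k : ℕ, u k := by
    rintro ⟨s, y⟩ hp
    obtain ⟨t, ht0, htC⟩ := hc.unbounded s hp.1 y hp.2 (C + 1)
    have hk : c (s, (⌈t⌉₊ : ℝ)) y > C := by
      have hle : t ≤ (⌈t⌉₊ : ℝ) := Nat.le_ceil t
      have := cmono hc hp.1 hp.2 ht0 (le_trans ht0 hle) hle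
      linarith
    have : ((s, y) : EuclideanSpace ℝ (Fin n) × ETgt n) ∈ u ⌈t⌉₊ ∩ (B ×ˢ Y) := by
      rw [← hueq]; exact ⟨hk, hp⟩
    exact mem_iUnion.mpr ⟨⌈t⌉₊, this.1⟩
  obtain ⟨F, hF⟩ := (hBc.prod hYc).elim_finite_subcover u hu hcover
  refine ⟨((F.sup id : ℕ) : ℝ), by positivity, fun s hs y hy σ hσ => ?_⟩
  obtain ⟨k, hkF, hku⟩ := mem_iUnion₂.mp (hF (mk_mem_prod hs hy))
  have hk : c (s, (k:ℝ)) y > C := by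
    have : ((s, y) : EuclideanSpace ℝ (Fin n) × ETgt n) ∈ f k ⁻¹' Ioi C ∩ (B ×ˢ Y) := by
      rw [hueq]; exact ⟨hku, mem_prod.mpr ⟨hs, hy⟩⟩
    exact this.1
  refine le_trans (qfun_le hc hs hy (by positivity) (le_of_lt (lt_of_le_of_lt hσ hk))) ?_
  exact_mod_cast Finset.le_sup (f := id) hkF

lemma mod_incr (hBc : IsCompact B) (hYc : IsCompact Y) (hYne : Y.Nonempty)
    (M ε : ℝ) (hε : 0 < ε) :
    ∃ η > 0, ∀ s ∈ B, ∀ y ∈ Y, ∀ u : ℝ, 0 ≤ u → u + ε ≤ M + 1 →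
      c (s, u) y + η ≤ c (s, u + ε) y := by
  rcases B.eq_empty_or_nonempty with hB | hBne
  · exact ⟨1, one_pos, by simp [hB]⟩
  rcases le_or_gt (M + 1 - ε) (-1) with hM | hM
  · exact ⟨1, one_pos, fun s hs y hy u hu hue => by linarith⟩
  set a := max (M + 1 - ε) 0 with ha
  set K : Set ((EuclideanSpace ℝ (Fin n) × ETgt n) × ℝ) := (B ×ˢ Y) ×ˢ Icc 0 a with hKdef
  have hKc : IsCompact K := (hBc.prod hYc).prod isCompact_Icc
  have hKne : K.Nonempty := (hBne.prod hYne).prod (nonempty_Icc.mpr (le_max_right _ _))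
  set g : (EuclideanSpace ℝ (Fin n) × ETgt n) × ℝ → ℝ :=
    fun p => c (p.1.1, p.2 + ε) p.1.2 - c (p.1.1, p.2) p.1.2 with hg
  have hgc : ContinuousOn g K := by
    have h1 : ContinuousOn (fun p : (EuclideanSpace ℝ (Fin n) × ETgt n) × ℝ =>
        c (p.1.1, p.2 + ε) p.1.2) K := by
      have hmap : ContinuousOn (fun p : (EuclideanSpace ℝ (Fin n) × ETgt n) × ℝ =>
          (((p.1.1, p.2 + ε) : ESrc n), p.1.2)) K := by fun_prop
      refine (cont_c hc).comp hmap (fun p hp => ⟨⟨hp.1.1, mem_Ici.mpr ?_⟩, hp.1.2⟩)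
      show (0:ℝ) ≤ p.2 + ε
      have := hp.2.1; linarith
    have h2 : ContinuousOn (fun p : (EuclideanSpace ℝ (Fin n) × ETgt n) × ℝ =>
        c (p.1.1, p.2) p.1.2) K := by
      have hmap : ContinuousOn (fun p : (EuclideanSpace ℝ (Fin n) × ETgt n) × ℝ =>
          (((p.1.1, p.2) : ESrc n), p.1.2)) K := by fun_prop
      exact (cont_c hc).comp hmap (fun p hp => ⟨⟨hp.1.1, hp.2.1⟩, hp.1.2⟩)
    exact h1.sub h2
  obtain ⟨p0, hp0K, hp0min⟩ := hKc.exists_isMinOn hKne hgc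
  have hp0pos : 0 < g p0 := by
    have := hc.strictMonoOn p0.1.1 hp0K.1.1 p0.1.2 hp0K.1.2 hp0K.2.1
      (by have := hp0K.2.1; positivity : (0:ℝ) ≤ p0.2 + ε) (by linarith [hε])
    simpa [hg] using sub_pos.mpr this
  refine ⟨g p0, hp0pos, fun s hs y hy u hu hue => ?_⟩
  have huK : (((s, y), u) : (EuclideanSpace ℝ (Fin n) × ETgt n) × ℝ) ∈ K :=
    ⟨⟨hs, hy⟩, hu, le_max_of_le_left (by linarith)⟩
  have h5 := isMinOn_iff.mp hp0min _ huK
  have h6 : g p0 = c (p0.1.1, p0.2 + ε) p0.1.2 - c (p0.1.1, p0.2) p0.1.2 := rfl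
  have h7 : g ((s, y), u) = c (s, u + ε) y - c (s, u) y := rfl
  rw [h6, h7] at h5
  linarith

lemma equi_c {s0 : EuclideanSpace ℝ (Fin n)} (hs0 : s0 ∈ B) {η : ℝ} (hη : 0 < η) :
    ∃ δ > 0, ∀ s ∈ B, dist s s0 < δ → ∀ t : ℝ, 0 ≤ t → ∀ y ∈ Y,
      |c (s, t) y - c (s0, t) y| ≤ η := by
  have h := hc.equicontinuous s0 hs0
  have hU : {p : ℝ × ℝ | dist p.1 p.2 < η} ∈ 𝓤 ℝ := Metric.dist_mem_uniformity hη
  have h2 := h _ hU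
  rw [eventually_nhdsWithin_iff, Metric.eventually_nhds_iff] at h2
  obtain ⟨δ, hδ, hδ2⟩ := h2
  refine ⟨δ, hδ, fun s hs hss t ht y hy => ?_⟩
  have := hδ2 hss hs ⟨⟨t, ht⟩, ⟨y, hy⟩⟩
  simp only [mem_setOf_eq] at this
  rw [Real.dist_eq, abs_sub_comm] at this
  exact le_of_lt this

lemma mod_cont (hBc : IsCompact B) (hYc : IsCompact Y) (M Δ : ℝ) (hM : 0 ≤ M) (hΔ : 0 < Δ) :
    ∃ γ, 0 < γ ∧ γ ≤ 1 ∧ ∀ s ∈ B, ∀ y ∈ Y, ∀ u : ℝ, 0 ≤ u → u ≤ M →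
      c (s, u + γ) y ≤ c (s, u) y + Δ := by
  set K : Set (ESrc n × ETgt n) := (B ×ˢ Icc (0:ℝ) (M+1)) ×ˢ Y with hK
  have hKc : IsCompact K := (hBc.prod isCompact_Icc).prod hYc
  have hsub : K ⊆ (B ×ˢ Ici (0:ℝ)) ×ˢ Y :=
    prod_mono_left (prod_mono_right Icc_subset_Ici_self)
  have huc : UniformContinuousOn (fun z : ESrc n × ETgt n => c z.1 z.2) K :=
    hKc.uniformContinuousOn_of_continuous ((cont_c hc).mono hsub)
  rw [Metric.uniformContinuousOn_iff] at huc
  obtain ⟨δ, hδ, hδ2⟩ := huc Δ hΔ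
  refine ⟨min (δ/2) 1, by positivity, min_le_right _ _, fun s hs y hy u hu huM => ?_⟩
  set γ := min (δ/2) 1 with hγ
  have hγpos : 0 < γ := by positivity
  have h1 : (((s, u + γ), y) : ESrc n × ETgt n) ∈ K :=
    ⟨⟨hs, by positivity, by simp only [hγ]; have := min_le_right (δ/2) 1; linarith⟩, hy⟩
  have h2 : (((s, u), y) : ESrc n × ETgt n) ∈ K := ⟨⟨hs, hu, by linarith⟩, hy⟩
  have hd : dist (((s, u + γ), y) : ESrc n × ETgt n) ((s, u), y) < δ := by
    have hduu : dist (u + γ) u = γ := by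
      rw [Real.dist_eq]; rw [show u + γ - u = γ by ring, abs_of_pos hγpos]
    rw [Prod.dist_eq, Prod.dist_eq, dist_self, dist_self, hduu,
      max_eq_right hγpos.le, max_eq_left hγpos.le]
    have := min_le_left (δ/2) 1
    calc γ ≤ δ/2 := min_le_left _ _
    _ < δ := by linarith
  have := hδ2 _ h1 _ h2 hd
  rw [Real.dist_eq] at this
  have := abs_sub_le_iff.mp (le_of_lt this)
  linarith [this.1]


lemma qstep (hBc : IsCompact B) (hYc : IsCompact Y) (hYne : Y.Nonempty)
    (M ε : ℝ) (hε : 0 < ε) :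
    ∃ η > 0, ∀ s ∈ B, ∀ y ∈ Y, ∀ σ σ' : ℝ, σ ≤ σ' → σ' ≤ σ + η →
      qfun c s y σ' ≤ M → qfun c s y σ' ≤ qfun c s y σ + ε := by
  obtain ⟨η₀, hη₀, hmod⟩ := mod_incr hc hBc hYc hYne M ε hε
  refine ⟨η₀ / 2, by positivity, fun s hs y hy σ σ' hσ hσ' hqM => ?_⟩
  by_contra hcon
  push_neg at hcon
  set t := qfun c s y σ with htd
  set t' := qfun c s y σ' with htd'
  have ht0 : 0 ≤ t := qfun_nonneg hc hs hy
  have ht'pos : 0 < t' := lt_of_le_of_lt (by positivity) hcon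
  have hceq : c (s, t') y = σ' := c_qfun_eq hc hs hy ht'pos
  have h1 : c (s, t + ε) y ≤ c (s, t') y :=
    cmono hc hs hy (mem_Ici.mpr (by linarith)) (mem_Ici.mpr (by linarith)) (le_of_lt hcon)
  have h2 : c (s, t) y + η₀ ≤ c (s, t + ε) y := hmod s hs y hy t ht0 (by linarith)
  have h3 : σ ≤ c (s, t) y := le_c_qfun hc hs hy
  linarith

lemma qstep_s (hBc : IsCompact B) (hYc : IsCompact Y) (hYne : Y.Nonempty)
    (M ε : ℝ) (hε : 0 < ε) {s0 : EuclideanSpace ℝ (Fin n)} (hs0 : s0 ∈ B) :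
    ∃ δ > 0, ∀ s ∈ B, dist s s0 < δ → ∀ y ∈ Y, ∀ σ : ℝ,
      qfun c s y σ ≤ M → qfun c s0 y σ ≤ M →
      |qfun c s y σ - qfun c s0 y σ| ≤ ε := by
  obtain ⟨η₀, hη₀, hmod⟩ := mod_incr hc hBc hYc hYne M ε hε
  obtain ⟨δ, hδ, hequi⟩ := equi_c hc hs0 (show (0:ℝ) < η₀ / 2 by positivity)
  refine ⟨δ, hδ, fun s hs hss y hy σ hqM hq0M => ?_⟩
  have key : ∀ s1 ∈ B, ∀ s2 ∈ B,
      (∀ t : ℝ, 0 ≤ t → |c (s1, t) y - c (s2, t) y| ≤ η₀ / 2) →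
      qfun c s1 y σ ≤ M → qfun c s1 y σ ≤ qfun c s2 y σ + ε := by
    intro s1 hs1 s2 hs2 hcc hb1
    by_contra hcon
    push_neg at hcon
    set t := qfun c s2 y σ with htd
    set t' := qfun c s1 y σ with htd'
    have ht0 : 0 ≤ t := qfun_nonneg hc hs2 hy
    have ht'pos : 0 < t' := lt_of_le_of_lt (by positivity) hcon
    have hceq : c (s1, t') y = σ := c_qfun_eq hc hs1 hy ht'pos
    have h1 : c (s1, t + ε) y ≤ c (s1, t') y :=
      cmono hc hs1 hy (mem_Ici.mpr (by linarith)) (mem_Ici.mpr (by linarith)) (le_of_lt hcon)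
    have h2 : c (s1, t) y + η₀ ≤ c (s1, t + ε) y := hmod s1 hs1 y hy t ht0 (by linarith)
    have h3 : σ ≤ c (s2, t) y := le_c_qfun hc hs2 hy
    have h4 := abs_sub_le_iff.mp (hcc t ht0)
    linarith [h4.1, h4.2]
  have e1 : ∀ t : ℝ, 0 ≤ t → |c (s, t) y - c (s0, t) y| ≤ η₀ / 2 :=
    fun t ht => hequi s hs hss t ht y hy
  have e2 : ∀ t : ℝ, 0 ≤ t → |c (s0, t) y - c (s, t) y| ≤ η₀ / 2 :=
    fun t ht => by rw [abs_sub_comm]; exact e1 t ht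
  have k1 := key s hs s0 hs0 e1 hqM
  have k2 := key s0 hs0 s hs e2 hq0M
  rw [abs_le]
  constructor <;> linarith

lemma qstep_rev (hBc : IsCompact B) (hYc : IsCompact Y)
    (M Δ : ℝ) (hM : 0 ≤ M) (hΔ : 0 < Δ) :
    ∃ γ, 0 < γ ∧ γ ≤ 1 ∧ ∀ s ∈ B, ∀ y ∈ Y, ∀ σ : ℝ, 0 < qfun c s y σ →
      qfun c s y σ ≤ M → qfun c s y σ + γ ≤ qfun c s y (σ + Δ) := by
  obtain ⟨γ, hγ, hγ1, hmod⟩ := mod_cont hc hBc hYc M (Δ/2) hM (by positivity)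
  refine ⟨γ, hγ, hγ1, fun s hs y hy σ hq hqM => ?_⟩
  set t := qfun c s y σ with htd
  have hceq : c (s, t) y = σ := c_qfun_eq hc hs hy hq
  have h1 : c (s, t + γ) y ≤ c (s, t) y + Δ/2 := hmod s hs y hy t (le_of_lt hq) hqM
  exact le_qfun hc hs hy (by linarith) (by linarith)

section PbarBasic
variable {ψ : ETgt n → ℝ} {τ : ℝ} {s : EuclideanSpace ℝ (Fin n)}

lemma pbar_nonneg (hs : s ∈ B) : 0 ≤ pbar c Y ψ τ s :=
  Real.sSup_nonneg (by rintro x ⟨y, hy, rfl⟩; exact qfun_nonneg hc hs hy)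

omit hc in
lemma pbar_le {M : ℝ} (hM : 0 ≤ M) (h : ∀ y ∈ Y, qfun c s y (ψ y + τ) ≤ M) :
    pbar c Y ψ τ s ≤ M :=
  Real.sSup_le (by rintro x ⟨y, hy, rfl⟩; exact h y hy) hM

omit hc in
lemma le_pbar {M : ℝ} (h : ∀ y ∈ Y, qfun c s y (ψ y + τ) ≤ M) {y : ETgt n} (hy : y ∈ Y) :
    qfun c s y (ψ y + τ) ≤ pbar c Y ψ τ s :=
  le_csSup ⟨M, by rintro x ⟨y', hy', rfl⟩; exact h y' hy'⟩ ⟨y, hy, rfl⟩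

end PbarBasic

lemma pbar_equicont (hBc : IsCompact B) (hYc : IsCompact Y) (hYne : Y.Nonempty)
    {M : ℝ} (hM : 0 ≤ M) {s0 : EuclideanSpace ℝ (Fin n)} (hs0 : s0 ∈ B)
    {ε : ℝ} (hε : 0 < ε) :
    ∃ δ > 0, ∀ ψ : ETgt n → ℝ, ∀ τ : ℝ,
      (∀ s ∈ B, ∀ y ∈ Y, qfun c s y (ψ y + τ) ≤ M) →
      ∀ s ∈ B, dist s s0 < δ → |pbar c Y ψ τ s - pbar c Y ψ τ s0| ≤ ε := by
  obtain ⟨δ, hδ, hq⟩ := qstep_s hc hBc hYc hYne M ε hε hs0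
  refine ⟨δ, hδ, fun ψ τ hbd s hs hss => ?_⟩
  have hb1 : ∀ y ∈ Y, qfun c s y (ψ y + τ) ≤ M := fun y hy => hbd s hs y hy
  have hb2 : ∀ y ∈ Y, qfun c s0 y (ψ y + τ) ≤ M := fun y hy => hbd s0 hs0 y hy
  have h1 : pbar c Y ψ τ s ≤ pbar c Y ψ τ s0 + ε := by
    refine pbar_le (le_trans (pbar_nonneg hc hs0) (by linarith)) ?_
    intro y hy
    have := abs_le.mp (hq s hs hss y hy (ψ y + τ) (hb1 y hy) (hb2 y hy))
    linarith [le_pbar hb2 hy]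
  have h2 : pbar c Y ψ τ s0 ≤ pbar c Y ψ τ s + ε := by
    refine pbar_le (le_trans (pbar_nonneg hc hs) (by linarith)) ?_
    intro y hy
    have := abs_le.mp (hq s hs hss y hy (ψ y + τ) (hb1 y hy) (hb2 y hy))
    linarith [le_pbar hb1 hy]
  rw [abs_le]; constructor <;> linarith

lemma pbar_contOn (hBc : IsCompact B) (hYc : IsCompact Y) (hYne : Y.Nonempty)
    {ψ : ETgt n → ℝ} {τ : ℝ} {M : ℝ}
    (hbd : ∀ s ∈ B, ∀ y ∈ Y, qfun c s y (ψ y + τ) ≤ M) :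
    ContinuousOn (pbar c Y ψ τ) B := by
  have hM0 : 0 ≤ max M 0 := le_max_right _ _
  have hbd' : ∀ s ∈ B, ∀ y ∈ Y, qfun c s y (ψ y + τ) ≤ max M 0 :=
    fun s hs y hy => le_trans (hbd s hs y hy) (le_max_left _ _)
  intro s0 hs0
  rw [Metric.continuousWithinAt_iff]
  intro ε hε
  obtain ⟨δ, hδ, hp⟩ := pbar_equicont hc hBc hYc hYne hM0 hs0 (half_pos hε)
  refine ⟨δ, hδ, fun s hs hss => ?_⟩
  rw [Real.dist_eq]
  exact lt_of_le_of_lt (hp ψ τ hbd' s hs hss) (half_lt_self hε)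


lemma pbar_mono {s : EuclideanSpace ℝ (Fin n)} (hs : s ∈ B) {ψ : ETgt n → ℝ} {τ τ' T : ℝ}
    (hττ' : τ ≤ τ') (hbd' : ∀ y ∈ Y, qfun c s y (ψ y + τ') ≤ T) :
    pbar c Y ψ τ s ≤ pbar c Y ψ τ' s := by
  refine Real.sSup_le ?_ (pbar_nonneg hc hs)
  rintro x ⟨y, hy, rfl⟩
  exact le_trans (qfun_mono_sigma hc hs hy (by linarith)) (le_pbar hbd' hy)

end Aux

/-- Under Assumption A, for each `ψ ∈ C(Y)` there is a unique constant `τ_ψ`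
such that `p̄_ψ(s) = max_{y∈Y} q(s, y, ψ(y) + τ_ψ)` is a probability density on `B`; moreover
the set `S = {p̄_ψ : ψ ∈ C(Y)}` is uniformly bounded and equicontinuous. -/
theorem pbar_exists_unique_tau_and_S_uniformly_bounded_equicontinuous
    (n : ℕ) (hn : 1 ≤ n)
    (B : Set (EuclideanSpace ℝ (Fin n))) (hBc : IsCompact B) (hBint : (interior B).Nonempty)
    (Y : Set (ETgt n)) (hYc : IsCompact Y) (hYne : Y.Nonempty)
    (c : ESrc n → ETgt n → ℝ) (hc : AssumptionA B Y c) :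
    (∀ ψ : ETgt n → ℝ, ContinuousOn ψ Y →
      ∃! τ : ℝ, ∫ s in B, pbar c Y ψ τ s = 1) ∧
    (∃ M : ℝ, ∀ (ψ : ETgt n → ℝ) (τ : ℝ), ContinuousOn ψ Y →
      (∫ s in B, pbar c Y ψ τ s = 1) → ∀ s ∈ B, pbar c Y ψ τ s ≤ M) ∧
    EquicontinuousOn
      (fun ψτ : {p : (ETgt n → ℝ) × ℝ //
          ContinuousOn p.1 Y ∧ ∫ s in B, pbar c Y p.1 p.2 s = 1} =>
        pbar c Y ψτ.1.1 ψτ.1.2) B := by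
  classical
  obtain ⟨x0, hx0⟩ := hBint
  have hBne : B.Nonempty := ⟨x0, interior_subset hx0⟩
  have hBmeas : MeasurableSet B := hBc.isClosed.measurableSet
  have hvol_pos : 0 < volume B :=
    lt_of_lt_of_le (IsOpen.measure_pos volume isOpen_interior ⟨x0, hx0⟩)
      (measure_mono interior_subset)
  have hvol_fin : volume B < ⊤ := hBc.measure_lt_top
  set vB : ℝ := (volume B).toReal with hvB
  have hvBpos : 0 < vB := ENNReal.toReal_pos hvol_pos.ne' hvol_fin.ne
  -- bound on ψ
  have hCψ : ∀ ψ : ETgt n → ℝ, ContinuousOn ψ Y → ∃ Cψ, 0 ≤ Cψ ∧ ∀ y ∈ Y,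
      ψ y ≤ Cψ ∧ -Cψ ≤ ψ y := by
    intro ψ hψ
    obtain ⟨C, hC⟩ := hYc.exists_bound_of_continuousOn hψ
    refine ⟨max C 0, le_max_right _ _, fun y hy => ?_⟩
    have h1 : |ψ y| ≤ max C 0 :=
      le_trans (by simpa [Real.norm_eq_abs] using hC y hy) (le_max_left _ _)
    exact ⟨(abs_le.mp h1).2, (abs_le.mp h1).1⟩
  -- per-(ψ,τ) bound on qfun
  have hbd_tau : ∀ (ψ : ETgt n → ℝ) (Cψ τ : ℝ), (∀ y ∈ Y, ψ y ≤ Cψ) →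
      ∃ T, 0 ≤ T ∧ ∀ s ∈ B, ∀ y ∈ Y, ∀ τ' ≤ τ, qfun c s y (ψ y + τ') ≤ T := by
    intro ψ Cψ τ hψb
    obtain ⟨T, hT0, hT⟩ := qbound hc hBc hYc (Cψ + τ)
    exact ⟨T, hT0, fun s hs y hy τ' hτ' =>
      hT s hs y hy _ (by have := hψb y hy; linarith)⟩
  -- integrability
  have hint : ∀ (ψ : ETgt n → ℝ) (τ T : ℝ),
      (∀ s ∈ B, ∀ y ∈ Y, qfun c s y (ψ y + τ) ≤ T) →
      IntegrableOn (pbar c Y ψ τ) B volume :=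
    fun ψ τ T hbd => (pbar_contOn hc hBc hYc hYne hbd).integrableOn_compact hBc
  -- the uniform bound Mu for normalized pairs
  obtain ⟨C1, hC10, hC1b⟩ := cbound hc hBc hYc (2 / vB)
  obtain ⟨Mu, hMu0, hMub⟩ := qbound hc hBc hYc C1
  have key2 : ∀ (ψ : ETgt n → ℝ) (τ : ℝ), ContinuousOn ψ Y →
      (∫ s in B, pbar c Y ψ τ s = 1) →
      ∀ s ∈ B, ∀ y ∈ Y, qfun c s y (ψ y + τ) ≤ Mu := by
    intro ψ τ hψ hI s hs y hy
    obtain ⟨Cψ, hCψ0, hCψb⟩ := hCψ ψ hψ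
    obtain ⟨T, hT0, hT⟩ := hbd_tau ψ Cψ τ (fun y hy => (hCψb y hy).1)
    have hTb : ∀ s ∈ B, ∀ y ∈ Y, qfun c s y (ψ y + τ) ≤ T :=
      fun s hs y hy => hT s hs y hy τ le_rfl
    have hInt := hint ψ τ T hTb
    have hs1 : ∃ s1 ∈ B, pbar c Y ψ τ s1 ≤ 2 / vB := by
      by_contra hcon
      push_neg at hcon
      have hmono : ∫ _ in B, (2 / vB) ∂volume ≤ ∫ s in B, pbar c Y ψ τ s := by
        refine setIntegral_mono_on ?_ hInt hBmeas (fun s hs => (hcon s hs).le)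
        exact integrableOn_const hvol_fin.ne
      rw [setIntegral_const, smul_eq_mul, hI] at hmono
      rw [measureReal_def, ← hvB] at hmono
      have : vB * (2 / vB) = 2 := by field_simp
      rw [this] at hmono
      linarith
    obtain ⟨s1, hs1B, hs1le⟩ := hs1
    have hq1 : qfun c s1 y (ψ y + τ) ≤ 2 / vB :=
      le_trans (le_pbar (fun y' hy' => hTb s1 hs1B y' hy') hy) hs1le
    have hσ : ψ y + τ ≤ c (s1, 2 / vB) y :=
      c_qfun_le hc hs1B hy (by positivity) hq1
    have hσC1 : ψ y + τ ≤ C1 :=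
      le_trans hσ (hC1b s1 hs1B y hy _ (by positivity) le_rfl)
    exact hMub s hs y hy _ hσC1
  have part2 : ∀ (ψ : ETgt n → ℝ) (τ : ℝ), ContinuousOn ψ Y →
      (∫ s in B, pbar c Y ψ τ s = 1) → ∀ s ∈ B, pbar c Y ψ τ s ≤ Mu :=
    fun ψ τ hψ hI s hs => pbar_le hMu0 (fun y hy => key2 ψ τ hψ hI s hs y hy)
  refine ⟨?_, ⟨Mu, part2⟩, ?_⟩
  · -- existence and uniqueness of τ
    intro ψ hψ
    obtain ⟨Cψ, hCψ0, hCψb⟩ := hCψ ψ hψ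
    set Ifun : ℝ → ℝ := fun τ => ∫ s in B, pbar c Y ψ τ s with hIfun
    have hzero : Ifun (-Cψ) = 0 := by
      have hp0 : ∀ s ∈ B, pbar c Y ψ (-Cψ) s = 0 := by
        intro s hs
        have hq0 : ∀ y ∈ Y, qfun c s y (ψ y + -Cψ) = 0 := by
          intro y hy
          have hc0 : (0:ℝ) ≤ c (s, 0) y := hc.nonneg (s, 0) (mk_mem_prod hs (mem_Ici.mpr le_rfl)) y hy
          have hσ : ψ y + -Cψ ≤ c (s, 0) y := by have := (hCψb y hy).1; linarith
          exact le_antisymm (qfun_le hc hs hy le_rfl hσ) (qfun_nonneg hc hs hy)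
        exact le_antisymm (pbar_le le_rfl (fun y hy => le_of_eq (hq0 y hy)))
          (pbar_nonneg hc hs)
      have : ∫ s in B, pbar c Y ψ (-Cψ) s = ∫ _ in B, (0:ℝ) :=
        setIntegral_congr_fun hBmeas hp0
      simpa [hIfun] using this
    obtain ⟨r, hr, hball⟩ : ∃ r > 0, Metric.ball x0 r ⊆ B := by
      obtain ⟨r, hr, hball⟩ := Metric.isOpen_iff.mp isOpen_interior x0 hx0
      exact ⟨r, hr, hball.trans interior_subset⟩
    set v : ℝ := (volume (Metric.ball x0 r)).toReal with hvd
    have hvpos : 0 < v :=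
      ENNReal.toReal_pos (Metric.measure_ball_pos volume x0 hr).ne' measure_ball_lt_top.ne
    set R : ℝ := 2 / v + 1 with hRd
    have hRpos : 0 < R := by positivity
    obtain ⟨CR, hCR0, hCRb⟩ := cbound hc hBc hYc R
    set τbig : ℝ := max (CR + Cψ) (-Cψ) with hτbigd
    have hτbig_ge : -Cψ ≤ τbig := le_max_right _ _
    obtain ⟨T2, hT20, hT2⟩ := hbd_tau ψ Cψ τbig (fun y hy => (hCψb y hy).1)
    have hbig : 2 ≤ Ifun τbig := by
      obtain ⟨y0, hy0⟩ := hYne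
      have hge : ∀ s ∈ Metric.ball x0 r, R ≤ pbar c Y ψ τbig s := by
        intro s hsball
        have hsB := hball hsball
        have h1 : c (s, R) y0 ≤ ψ y0 + τbig := by
          have h2 : c (s, R) y0 ≤ CR := hCRb s hsB y0 hy0 R hRpos.le le_rfl
          have h3 := (hCψb y0 hy0).2
          have h4 : CR + Cψ ≤ τbig := le_max_left _ _
          linarith
        exact le_trans (le_qfun hc hsB hy0 hRpos.le h1)
          (le_pbar (fun y hy => hT2 s hsB y hy τbig le_rfl) hy0)
      have hIntB : IntegrableOn (pbar c Y ψ τbig) B volume :=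
        hint ψ τbig T2 (fun s hs y hy => hT2 s hs y hy τbig le_rfl)
      have hnn : 0 ≤ᵐ[volume.restrict B] pbar c Y ψ τbig :=
        (ae_restrict_iff' hBmeas).mpr (ae_of_all _ (fun s hs => pbar_nonneg hc hs))
      have h5 : ∫ s in Metric.ball x0 r, pbar c Y ψ τbig s ≤ Ifun τbig :=
        setIntegral_mono_set hIntB hnn (HasSubset.Subset.eventuallyLE hball)
      have h6 : ∫ _ in Metric.ball x0 r, R ∂volume ≤
          ∫ s in Metric.ball x0 r, pbar c Y ψ τbig s :=
        setIntegral_mono_on (integrableOn_const measure_ball_lt_top.ne)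
          (hIntB.mono_set hball) measurableSet_ball hge
      rw [setIntegral_const, smul_eq_mul, measureReal_def, ← hvd] at h6
      have h7 : v * R = 2 + v := by rw [hRd]; field_simp
      linarith
    have hcont : ContinuousOn Ifun (Icc (-Cψ) τbig) := by
      intro τ0 hτ0
      rw [Metric.continuousWithinAt_iff]
      intro ε hε
      set ε' : ℝ := min (ε / (vB + 1)) 1 with hε'd
      have hε'pos : 0 < ε' := lt_min (by positivity) one_pos
      obtain ⟨η, hη, hqs⟩ := qstep hc hBc hYc hYne T2 ε' hε'pos
      have hεv : ε' * vB < ε := by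
        have h9 : ε' ≤ ε / (vB + 1) := min_le_left _ _
        have h10 : ε / (vB + 1) * (vB + 1) = ε := div_mul_cancel₀ ε (by positivity)
        have h11 : 0 < ε / (vB + 1) := by positivity
        nlinarith
      have hcomp : ∀ τa τb, τa ∈ Icc (-Cψ) τbig → τb ∈ Icc (-Cψ) τbig → τa ≤ τb →
          τb ≤ τa + η → Ifun τa ≤ Ifun τb ∧ Ifun τb ≤ Ifun τa + ε' * vB := by
        intro τa τb hτa hτb hab hba
        have hbda : ∀ s ∈ B, ∀ y ∈ Y, qfun c s y (ψ y + τa) ≤ T2 :=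
          fun s hs y hy => hT2 s hs y hy τa hτa.2
        have hbdb : ∀ s ∈ B, ∀ y ∈ Y, qfun c s y (ψ y + τb) ≤ T2 :=
          fun s hs y hy => hT2 s hs y hy τb hτb.2
        have hIa := hint ψ τa T2 hbda
        have hIb := hint ψ τb T2 hbdb
        constructor
        · exact setIntegral_mono_on hIa hIb hBmeas
            (fun s hs => pbar_mono hc hs hab (fun y hy => hbdb s hs y hy))
        · have hpw : ∀ s ∈ B, pbar c Y ψ τb s ≤ pbar c Y ψ τa s + ε' := by
            intro s hs
            refine pbar_le (add_nonneg (pbar_nonneg hc hs) hε'pos.le) ?_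
            intro y hy
            have := hqs s hs y hy (ψ y + τa) (ψ y + τb) (by linarith) (by linarith)
              (hbdb s hs y hy)
            linarith [le_pbar (fun y' hy' => hbda s hs y' hy') hy]
          have hconst : IntegrableOn (fun _ : EuclideanSpace ℝ (Fin n) => ε') B volume :=
            integrableOn_const hvol_fin.ne
          calc Ifun τb ≤ ∫ s in B, (pbar c Y ψ τa s + ε') :=
                setIntegral_mono_on hIb (hIa.add hconst) hBmeas hpw
          _ = Ifun τa + ε' * vB := by
                rw [integral_add hIa hconst, setIntegral_const, smul_eq_mul, measureReal_def, ← hvB]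
                ring
      refine ⟨η, hη, fun τ hτ hdist => ?_⟩
      have habs := abs_lt.mp (by rwa [Real.dist_eq] at hdist)
      rw [Real.dist_eq, abs_lt]
      rcases le_total τ τ0 with h | h
      · have := hcomp τ τ0 hτ hτ0 h (by linarith [habs.1])
        constructor <;> linarith [this.1, this.2]
      · have := hcomp τ0 τ hτ0 hτ h (by linarith [habs.2])
        constructor <;> linarith [this.1, this.2]
    have h1mem : (1:ℝ) ∈ Icc (Ifun (-Cψ)) (Ifun τbig) := by
      rw [hzero]; exact ⟨zero_le_one, by linarith⟩
    obtain ⟨τstar, hτstarmem, hIτ⟩ := intermediate_value_Icc hτbig_ge hcont h1mem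
    have huniq : ∀ τ1 τ2 : ℝ, τ1 < τ2 → Ifun τ1 = 1 → Ifun τ2 = 1 → False := by
      intro τ1 τ2 h12 hI1 hI2
      obtain ⟨T3, hT30, hT3⟩ := hbd_tau ψ Cψ τ2 (fun y hy => (hCψb y hy).1)
      have hbd1 : ∀ s ∈ B, ∀ y ∈ Y, qfun c s y (ψ y + τ1) ≤ T3 :=
        fun s hs y hy => hT3 s hs y hy τ1 h12.le
      have hbd2 : ∀ s ∈ B, ∀ y ∈ Y, qfun c s y (ψ y + τ2) ≤ T3 :=
        fun s hs y hy => hT3 s hs y hy τ2 le_rfl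
      have hInt1 := hint ψ τ1 T3 hbd1
      have hInt2 := hint ψ τ2 T3 hbd2
      have hgnn : ∀ s ∈ B, pbar c Y ψ τ1 s ≤ pbar c Y ψ τ2 s :=
        fun s hs => pbar_mono hc hs h12.le (fun y hy => hbd2 s hs y hy)
      have hsub0 : ∫ s in B, (pbar c Y ψ τ2 s - pbar c Y ψ τ1 s) = 0 := by
        rw [integral_sub hInt2 hInt1]
        change Ifun τ2 - Ifun τ1 = 0
        rw [hI1, hI2]; ring
      have hnnae : 0 ≤ᵐ[volume.restrict B]
          fun s => pbar c Y ψ τ2 s - pbar c Y ψ τ1 s :=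
        (ae_restrict_iff' hBmeas).mpr (ae_of_all _ fun s hs => sub_nonneg.mpr (hgnn s hs))
      have hεq := (integral_eq_zero_iff_of_nonneg_ae hnnae (hInt2.sub hInt1)).mp hsub0
      have hex : ∃ s ∈ B, 0 < pbar c Y ψ τ1 s ∧ pbar c Y ψ τ2 s = pbar c Y ψ τ1 s := by
        by_contra hcon
        push_neg at hcon
        have hae : ∀ᵐ s ∂(volume.restrict B), pbar c Y ψ τ1 s ≤ 0 := by
          filter_upwards [hεq, ae_restrict_mem hBmeas] with s h1 h2
          simp only [Pi.zero_apply] at h1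
          by_contra h3
          push_neg at h3
          exact absurd (by linarith : pbar c Y ψ τ2 s = pbar c Y ψ τ1 s) (hcon s h2 h3)
        have : Ifun τ1 ≤ 0 := integral_nonpos_of_ae hae
        linarith
      obtain ⟨sstar, hsstarB, hPpos, hPeq⟩ := hex
      set P := pbar c Y ψ τ1 sstar with hPd
      set Δ := τ2 - τ1 with hΔd
      obtain ⟨γ, hγ0, hγ1, hγrev⟩ := qstep_rev hc hBc hYc T3 Δ hT30 (by rw [hΔd]; linarith)
      set β := min (γ/2) (P/2) with hβd
      have hβpos : 0 < β := lt_min (by positivity) (by positivity)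
      have hlt : P - β < sSup ((fun y => qfun c sstar y (ψ y + τ1)) '' Y) := by
        have : pbar c Y ψ τ1 sstar = sSup ((fun y => qfun c sstar y (ψ y + τ1)) '' Y) := rfl
        rw [← this, ← hPd]; linarith
      obtain ⟨x, ⟨ystar, hystar, rfl⟩, hx⟩ := exists_lt_of_lt_csSup (hYne.image _) hlt
      set t := qfun c sstar ystar (ψ ystar + τ1) with htd
      have htpos : 0 < t := by
        have : β ≤ P/2 := min_le_right _ _
        linarith
      have htT3 : t ≤ T3 := hbd1 sstar hsstarB ystar hystar
      have h5 : t + γ ≤ qfun c sstar ystar (ψ ystar + τ1 + Δ) :=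
        hγrev sstar hsstarB ystar hystar _ htpos htT3
      have h6 : ψ ystar + τ1 + Δ = ψ ystar + τ2 := by rw [hΔd]; ring
      rw [h6] at h5
      have h7 : qfun c sstar ystar (ψ ystar + τ2) ≤ pbar c Y ψ τ2 sstar :=
        le_pbar (fun y hy => hbd2 sstar hsstarB y hy) hystar
      have h8 : β ≤ γ/2 := min_le_left _ _
      rw [hPeq] at h7
      linarith
    refine ⟨τstar, hIτ, fun τ' hτ' => ?_⟩
    by_contra hne
    rcases lt_or_gt_of_ne hne with h | h
    · exact huniq τ' τstar h hτ' hIτ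
    · exact huniq τstar τ' h hIτ hτ'
  · -- equicontinuity
    intro s0 hs0
    intro U hU
    obtain ⟨ε, hε, hUε⟩ := Metric.mem_uniformity_dist.mp hU
    obtain ⟨δ, hδ, hp⟩ := pbar_equicont hc hBc hYc hYne hMu0 hs0 (half_pos hε)
    have hmem : B ∩ Metric.ball s0 δ ∈ 𝓝[B] s0 :=
      inter_mem_nhdsWithin _ (Metric.ball_mem_nhds s0 hδ)
    refine eventually_of_mem hmem ?_
    rintro s ⟨hsB, hsball⟩ i
    have hbd := key2 i.1.1 i.1.2 i.2.1 i.2.2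
    have := hp i.1.1 i.1.2 hbd s hsB (Metric.mem_ball.mp hsball)
    apply hUε
    rw [Real.dist_eq, abs_sub_comm]
    exact lt_of_le_of_lt this (half_lt_self hε)
end
end

section
/- Suppose the cost function c satisfies Assumption A. Fix ν a Borel probability measure on Y and ψ ∈ C(Y), and define f_ψ : B × ℝ → ℝ ∪ {+∞} by f_ψ(s,t) := ∫_0^t ψ^c(s,p) dp + C_ψ for t ≥ 0 and f_ψ(s,t) := +∞ for t < 0, where C_ψ := (1/L^{d−1}(B)) ∫_Y ψ dν. Then for every s ∈ B: f_ψ(s,t') > f_ψ(s,t) + ψ^c(s,t)·(t'−t) for all t, t' ∈ [0,∞) with t' ≠ t; moreover f_ψ(s,·) is proper, convex and lower semi-continuous on ℝ, and strictly convex on [0,∞). -/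
open MeasureTheory Set Filter Topology

noncomputable section

section Aux

open intervalIntegral

private lemma auxG_int {G : ℝ → ℝ} (hm : MonotoneOn G (Ici (0:ℝ))) {a b : ℝ}
    (ha : 0 ≤ a) (hb : 0 ≤ b) : IntervalIntegrable G volume a b :=
  (hm.mono (fun x hx => le_trans (le_min ha hb) hx.1)).intervalIntegrable

private lemma auxG_key {G : ℝ → ℝ} (hsm : StrictMonoOn G (Ici (0:ℝ))) {t t' : ℝ}
    (ht : 0 ≤ t) (hlt : t < t') :
    G t * (t' - t) < (∫ p in t..t', G p) ∧ (∫ p in t..t', G p) < G t' * (t' - t) := by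
  have gmono := hsm.monotoneOn
  set m := (t + t') / 2 with hm
  have htm : t < m := by rw [hm]; linarith
  have hmt' : m < t' := by rw [hm]; linarith
  have hm0 : 0 ≤ m := le_of_lt (lt_of_le_of_lt ht htm)
  have ht'0 : 0 ≤ t' := le_of_lt (lt_of_le_of_lt ht hlt)
  have i1 : IntervalIntegrable G volume t m := auxG_int gmono ht hm0
  have i2 : IntervalIntegrable G volume m t' := auxG_int gmono hm0 ht'0
  have hsplit : (∫ p in t..m, G p) + (∫ p in m..t', G p) = ∫ p in t..t', G p :=
    integral_add_adjacent_intervals i1 i2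
  have low1 : G t * (m - t) ≤ ∫ p in t..m, G p := by
    have := integral_mono_on htm.le (_root_.intervalIntegrable_const (c := G t)) i1
      (fun x hx => gmono ht (le_trans ht hx.1) hx.1)
    simpa [smul_eq_mul, mul_comm] using this
  have low2 : G m * (t' - m) ≤ ∫ p in m..t', G p := by
    have := integral_mono_on hmt'.le (_root_.intervalIntegrable_const (c := G m)) i2
      (fun x hx => gmono hm0 (le_trans hm0 hx.1) hx.1)
    simpa [smul_eq_mul, mul_comm] using this
  have up1 : (∫ p in t..m, G p) ≤ G m * (m - t) := by
    have := integral_mono_on htm.le i1 (_root_.intervalIntegrable_const (c := G m))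
      (fun x hx => gmono (le_trans ht hx.1) hm0 hx.2)
    simpa [smul_eq_mul, mul_comm] using this
  have up2 : (∫ p in m..t', G p) ≤ G t' * (t' - m) := by
    have := integral_mono_on hmt'.le i2 (_root_.intervalIntegrable_const (c := G t'))
      (fun x hx => gmono (le_trans hm0 hx.1) ht'0 hx.2)
    simpa [smul_eq_mul, mul_comm] using this
  have hgtm : G t < G m := hsm ht hm0 htm
  have hgmt' : G m < G t' := hsm hm0 ht'0 hmt'
  constructor
  · nlinarith [low1, low2, hsplit]
  · nlinarith [up1, up2, hsplit]

private lemma auxG_subgrad {G : ℝ → ℝ} (hsm : StrictMonoOn G (Ici (0:ℝ))) (C : ℝ) :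
    ∀ t ∈ Ici (0:ℝ), ∀ t' ∈ Ici (0:ℝ), t' ≠ t →
      ((∫ p in (0:ℝ)..t, G p) + C) + G t * (t' - t) < (∫ p in (0:ℝ)..t', G p) + C := by
  intro t ht t' ht' hne
  have gmono := hsm.monotoneOn
  rcases hne.lt_or_gt with h | h
  · have hdiff : (∫ p in (0:ℝ)..t', G p) + (∫ p in t'..t, G p) = ∫ p in (0:ℝ)..t, G p :=
      integral_add_adjacent_intervals (auxG_int gmono le_rfl ht') (auxG_int gmono ht' ht)
    have := (auxG_key hsm ht' h).2
    linarith
  · have hdiff : (∫ p in (0:ℝ)..t, G p) + (∫ p in t..t', G p) = ∫ p in (0:ℝ)..t', G p :=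
      integral_add_adjacent_intervals (auxG_int gmono le_rfl ht) (auxG_int gmono ht ht')
    have := (auxG_key hsm ht h).1
    linarith

private lemma auxG_strictConvex {G : ℝ → ℝ} (hsm : StrictMonoOn G (Ici (0:ℝ))) (C : ℝ) :
    StrictConvexOn ℝ (Ici (0:ℝ)) (fun t => (∫ p in (0:ℝ)..t, G p) + C) := by
  set F : ℝ → ℝ := fun t => (∫ p in (0:ℝ)..t, G p) + C with hF
  refine ⟨convex_Ici 0, ?_⟩
  intro x hx y hy hxy a b ha hb hab
  have ha' : a = 1 - b := by linarith
  subst ha'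
  set z := (1 - b) * x + b * y with hz
  have hzmem : z ∈ Ici (0:ℝ) := (convex_Ici (0:ℝ)) hx hy (by linarith) hb.le hab
  have hzx : z ≠ x := by
    intro hzx
    apply hxy
    have hby : b * y = b * x := by rw [hz] at hzx; nlinarith [hzx]
    exact (mul_left_cancel₀ hb.ne' hby).symm
  have hzy : z ≠ y := by
    intro hzy
    apply hxy
    have hb1 : (1 - b) ≠ 0 := by
      intro h0
      rw [hz] at hzy
      apply hxy
      exact (mul_left_cancel₀ hb.ne' (by nlinarith [hzy])).symm
    exact mul_left_cancel₀ hb1 (by rw [hz] at hzy; nlinarith [hzy])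
  have h1 : F z + G z * (x - z) < F x := auxG_subgrad hsm C z hzmem x hx (Ne.symm hzx)
  have h2 : F z + G z * (y - z) < F y := auxG_subgrad hsm C z hzmem y hy (Ne.symm hzy)
  have e1 : (1 - b) * (F z + G z * (x - z)) < (1 - b) * F x :=
    mul_lt_mul_of_pos_left h1 (by linarith)
  have e2 : b * (F z + G z * (y - z)) < b * F y := mul_lt_mul_of_pos_left h2 hb
  simp only [smul_eq_mul]
  show F ((1 - b) * x + b * y) < (1 - b) * F x + b * F y
  rw [← hz]
  have hGz : G z * ((1 - b) * x + b * y) = G z * z := by rw [← hz]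
  nlinarith [e1, e2, hGz]

private lemma auxG_cont {G : ℝ → ℝ} (hm : MonotoneOn G (Ici (0:ℝ))) (C : ℝ) :
    ∀ x : ℝ, 0 ≤ x →
      ContinuousWithinAt (fun t => (∫ p in (0:ℝ)..t, G p) + C) (Ici (0:ℝ)) x := by
  intro x hx
  have hsub : Icc (0:ℝ) (x + 1) = uIcc (0:ℝ) (x + 1) := (uIcc_of_le (by linarith)).symm
  have hint : IntervalIntegrable G volume 0 (x + 1) := auxG_int hm le_rfl (by linarith)
  have hco : ContinuousOn (fun b => ∫ p in (0:ℝ)..b, G p) (uIcc (0:ℝ) (x + 1)) :=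
    continuousOn_primitive_interval' hint left_mem_uIcc
  have hcoF : ContinuousOn (fun t => (∫ p in (0:ℝ)..t, G p) + C) (Icc (0:ℝ) (x + 1)) := by
    rw [hsub]
    exact hco.add continuousOn_const
  have hxmem : x ∈ Icc (0:ℝ) (x + 1) := ⟨hx, by linarith⟩
  have hmem : Icc (0:ℝ) (x + 1) ∈ 𝓝[Ici (0:ℝ)] x := by
    refine mem_of_superset (inter_mem self_mem_nhdsWithin
      (mem_nhdsWithin_of_mem_nhds (Iio_mem_nhds (lt_add_one x)))) ?_
    rintro p ⟨hp1, hp2⟩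
    exact ⟨hp1, le_of_lt hp2⟩
  exact (hcoF x hxmem).mono_of_mem_nhdsWithin hmem

end Aux

/-- Strict subgradient inequality and convexity properties of
`f_ψ(s,t) = ∫_0^t ψ^c(s,p) dp + C_ψ` (extended by `+∞` for `t < 0`). -/
theorem f_psi_strictly_convex
    (n : ℕ) (hn : 1 ≤ n)
    (B : Set (EuclideanSpace ℝ (Fin n))) (hBc : IsCompact B) (hBint : (interior B).Nonempty)
    (Y : Set (ETgt n)) (hYc : IsCompact Y) (hYne : Y.Nonempty)
    (c : ESrc n → ETgt n → ℝ) (hc : AssumptionA B Y c)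
    (ν : Measure (ETgt n)) (hνp : IsProbabilityMeasure ν) (hνY : ν Yᶜ = 0)
    (ψ : ETgt n → ℝ) (hψ : ContinuousOn ψ Y)
    (s : EuclideanSpace ℝ (Fin n)) (hs : s ∈ B)
    (F : ℝ → ℝ)
    (hF : F = fun t : ℝ => (∫ p in (0:ℝ)..t, ctransform c Y ψ (s, p)) +
      (1 / (volume B).toReal) * ∫ y, ψ y ∂ν)
    (fE : ℝ → EReal)
    (hfE : fE = fun t : ℝ => if 0 ≤ t then ((F t : ℝ) : EReal) else ⊤) :
    (∀ t ∈ Ici (0:ℝ), ∀ t' ∈ Ici (0:ℝ), t' ≠ t →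
      F t + ctransform c Y ψ (s, t) * (t' - t) < F t') ∧
    (∀ t : ℝ, fE t ≠ ⊥) ∧ (∃ t : ℝ, fE t ≠ ⊤) ∧
    (∀ a b : ℝ, 0 ≤ a → 0 ≤ b → a + b = 1 → ∀ t t' : ℝ,
      fE (a * t + b * t') ≤ (a : EReal) * fE t + (b : EReal) * fE t') ∧
    LowerSemicontinuous fE ∧
    StrictConvexOn ℝ (Ici (0:ℝ)) F := by
  
  -- continuity of c on the product set
  have ccont : ContinuousOn (fun q : ESrc n × ETgt n => c q.1 q.2)
      ((B ×ˢ Ici (0:ℝ)) ×ˢ Y) := by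
    intro z hz
    obtain ⟨ε, hε, K, hK⟩ := hc.locLip z hz
    have h1 : ContinuousWithinAt (fun q : ESrc n × ETgt n => c q.1 q.2)
        (((B ×ˢ Ici (0:ℝ)) ×ˢ Y) ∩ Metric.ball z ε) z :=
      (hK.continuousOn) z ⟨hz, Metric.mem_ball_self hε⟩
    exact h1.mono_of_mem_nhdsWithin (inter_mem self_mem_nhdsWithin
      (mem_nhdsWithin_of_mem_nhds (Metric.ball_mem_nhds z hε)))
  -- for p ≥ 0, the min defining ψ^c(s,p) is attained
  have hminat : ∀ p : ℝ, 0 ≤ p → ∃ y₀ ∈ Y,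
      ctransform c Y ψ (s, p) = c (s, p) y₀ - ψ y₀ ∧
      ∀ y ∈ Y, ctransform c Y ψ (s, p) ≤ c (s, p) y - ψ y := by
    intro p hp
    have hcy : ContinuousOn (fun y => c (s, p) y - ψ y) Y := by
      have hc1 : ContinuousOn (fun y : ETgt n => c (s, p) y) Y := by
        have hmap : MapsTo (fun y : ETgt n => (((s, p) : ESrc n), y)) Y
            ((B ×ˢ Ici (0:ℝ)) ×ˢ Y) := fun y hy => ⟨⟨hs, hp⟩, hy⟩
        exact ccont.comp (Continuous.continuousOn (by continuity)) hmap
      exact hc1.sub hψ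
    obtain ⟨y₀, hy₀, hmin⟩ := hYc.exists_isMinOn hYne hcy
    have hle : ∀ y ∈ Y, c (s, p) y₀ - ψ y₀ ≤ c (s, p) y - ψ y := fun y hy => hmin hy
    have hleast : IsLeast ((fun y => c (s, p) y - ψ y) '' Y) (c (s, p) y₀ - ψ y₀) :=
      ⟨⟨y₀, hy₀, rfl⟩, by rintro r ⟨y, hy, rfl⟩; exact hle y hy⟩
    refine ⟨y₀, hy₀, hleast.csInf_eq, ?_⟩
    intro y hy
    exact csInf_le ⟨_, fun r hr => hleast.2 hr⟩ ⟨y, hy, rfl⟩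
  -- ψ^c(s,·) is strictly monotone on [0, ∞)
  have gsm : StrictMonoOn (fun p => ctransform c Y ψ (s, p)) (Ici (0:ℝ)) := by
    intro p hp p' hp' hlt
    obtain ⟨y₀, hy₀, heq, _⟩ := hminat p' hp'
    obtain ⟨_, _, _, hle⟩ := hminat p hp
    calc ctransform c Y ψ (s, p) ≤ c (s, p) y₀ - ψ y₀ := hle y₀ hy₀
      _ < c (s, p') y₀ - ψ y₀ := by
          have := hc.strictMonoOn s hs y₀ hy₀ hp hp' hlt
          simpa using sub_lt_sub_right this (ψ y₀)
      _ = ctransform c Y ψ (s, p') := heq.symm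
  set C : ℝ := (1 / (volume B).toReal) * ∫ y, ψ y ∂ν with hC
  have hFeq : F = fun t : ℝ =>
      (∫ p in (0:ℝ)..t, (fun p => ctransform c Y ψ (s, p)) p) + C := by
    rw [hF]
  have subgrad : ∀ t ∈ Ici (0:ℝ), ∀ t' ∈ Ici (0:ℝ), t' ≠ t →
      F t + ctransform c Y ψ (s, t) * (t' - t) < F t' := by
    intro t ht t' ht' hne
    have := auxG_subgrad gsm C t ht t' ht' hne
    rw [hFeq]
    exact this
  have hstrict : StrictConvexOn ℝ (Ici (0:ℝ)) F := by
    rw [hFeq]; exact auxG_strictConvex gsm C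
  have hconv : ConvexOn ℝ (Ici (0:ℝ)) F := hstrict.convexOn
  have Fcont : ∀ x : ℝ, 0 ≤ x → ContinuousWithinAt F (Ici (0:ℝ)) x := by
    rw [hFeq]; exact auxG_cont gsm.monotoneOn C
  refine ⟨subgrad, ?_, ?_, ?_, ?_, hstrict⟩
  · -- no ⊥ values
    intro t
    rw [hfE]
    by_cases ht : 0 ≤ t <;> simp [ht]
  · -- some finite value
    exact ⟨0, by rw [hfE]; simp⟩
  · -- EReal convexity
    intro a b ha hb hab t t'
    rcases eq_or_lt_of_le ha with ha0 | ha0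
    · have hb1 : b = 1 := by linarith
      simp [hfE, ← ha0, hb1]
    rcases eq_or_lt_of_le hb with hb0 | hb0
    · have ha1 : a = 1 := by linarith
      simp [hfE, ← hb0, ha1]
    simp only [hfE]
    by_cases ht : 0 ≤ t
    · by_cases ht' : 0 ≤ t'
      · have hz : 0 ≤ a * t + b * t' := add_nonneg (mul_nonneg ha ht) (mul_nonneg hb ht')
        simp only [if_pos ht, if_pos ht', if_pos hz]
        rw [← EReal.coe_mul, ← EReal.coe_mul, ← EReal.coe_add, EReal.coe_le_coe_iff]
        have := hconv.2 ht ht' ha hb hab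
        simpa [smul_eq_mul] using this
      · simp only [if_neg ht', if_pos ht]
        rw [EReal.coe_mul_top_of_pos hb0, EReal.add_top_of_ne_bot]
        · exact le_top
        · rw [← EReal.coe_mul]; exact EReal.coe_ne_bot _
    · simp only [if_neg ht]
      rw [EReal.coe_mul_top_of_pos ha0, EReal.top_add_of_ne_bot]
      · exact le_top
      · by_cases h0 : (0:ℝ) ≤ t'
        · simp only [if_pos h0]
          rw [← EReal.coe_mul]; exact EReal.coe_ne_bot _
        · simp only [if_neg h0]
          rw [EReal.coe_mul_top_of_pos hb0]; exact top_ne_bot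
  · -- lower semicontinuity
    intro x yv hyv
    by_cases hx : 0 ≤ x
    · rw [hfE] at hyv; simp only [if_pos hx] at hyv
      obtain ⟨r, hr1, hr2⟩ := EReal.exists_between_coe_real hyv
      rw [EReal.coe_lt_coe_iff] at hr2
      have hev1 : ∀ᶠ x' in 𝓝[Ici (0:ℝ)] x, yv < fE x' := by
        have htd : Tendsto F (𝓝[Ici (0:ℝ)] x) (𝓝 (F x)) := Fcont x hx
        have hIoi : F ⁻¹' Ioi r ∈ 𝓝[Ici (0:ℝ)] x := htd (Ioi_mem_nhds hr2)
        filter_upwards [hIoi, self_mem_nhdsWithin] with x' hx' hx''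
        rw [hfE]
        show yv < if (0:ℝ) ≤ x' then ((F x' : ℝ) : EReal) else ⊤
        rw [if_pos (show (0:ℝ) ≤ x' from hx'')]
        exact lt_trans hr1 (EReal.coe_lt_coe_iff.2 hx')
      have hev2 : ∀ᶠ x' in 𝓝[Iio (0:ℝ)] x, yv < fE x' := by
        filter_upwards [self_mem_nhdsWithin] with x' hx'
        rw [hfE]
        show yv < if (0:ℝ) ≤ x' then ((F x' : ℝ) : EReal) else ⊤
        rw [if_neg (not_le.2 (show x' < (0:ℝ) from hx'))]
        exact lt_of_lt_of_le hr1 le_top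
      have hnn : 𝓝 x = 𝓝[Iio (0:ℝ)] x ⊔ 𝓝[Ici (0:ℝ)] x := by
        rw [← nhdsWithin_union, Iio_union_Ici, nhdsWithin_univ]
      rw [hnn]
      exact eventually_sup.2 ⟨hev2, hev1⟩
    · have hopen : ∀ᶠ x' in 𝓝 x, x' < 0 :=
        Filter.Tendsto.eventually_lt_const (not_le.1 hx) tendsto_id
      filter_upwards [hopen] with x' hx'
      rw [hfE]
      show yv < if (0:ℝ) ≤ x' then ((F x' : ℝ) : EReal) else ⊤
      rw [if_neg (not_le.2 hx')]
      exact lt_of_lt_of_le hyv le_top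
end
end

section
/- Suppose the cost function c satisfies Assumption A and let ψ ∈ C(Y). Then the function (s,t) ↦ (1/t)∫_0^t ψ^c(s,p) dp tends to +∞ as t → +∞, uniformly in s ∈ B; that is, for every M > 0 there exists T > 0 such that for all t ≥ T and all s ∈ B, (1/t)∫_0^t ψ^c(s,p) dp ≥ M. -/
open MeasureTheory Set Filter Topology

noncomputable section

/-- Auxiliary: under Assumption A, `c((s,p),y)` tends to `+∞` as `p → ∞`,
uniformly over `s ∈ B` and `y ∈ Y`. -/
lemma aux_cost_unif {n : ℕ} {B : Set (EuclideanSpace ℝ (Fin n))} {Y : Set (ETgt n)}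
    {c : ESrc n → ETgt n → ℝ} (hBc : IsCompact B) (hBne : B.Nonempty)
    (hYc : IsCompact Y) (hYne : Y.Nonempty) (hc : AssumptionA B Y c) (R : ℝ) :
    ∃ P : ℝ, 0 ≤ P ∧ ∀ s ∈ B, ∀ y ∈ Y, ∀ p : ℝ, P ≤ p → R ≤ c (s, p) y := by
  -- Step A: pointwise in `s`, uniformly in `y ∈ Y`.
  have stepA : ∀ s ∈ B, ∃ P : ℝ, 0 ≤ P ∧ ∀ y ∈ Y, ∀ p : ℝ, P ≤ p → R + 1 ≤ c (s, p) y := by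
    intro s hs
    have hY : ∀ y ∈ Y, ∃ t : ℝ, 0 ≤ t ∧ ∃ δ : ℝ, 0 < δ ∧
        ∀ y' ∈ Y, dist y' y < δ → R + 1 ≤ c (s, t) y' := by
      intro y hy
      obtain ⟨t, ht0, htc⟩ := hc.unbounded s hs y hy (R + 2)
      obtain ⟨ε, hε, K, hK⟩ := hc.locLip ((s, t), y) ⟨⟨hs, ht0⟩, hy⟩
      refine ⟨t, ht0, min ε (1 / (K + 1)), lt_min hε (by positivity), ?_⟩
      intro y' hy' hdist
      have hdε : dist y' y < ε := lt_of_lt_of_le hdist (min_le_left _ _)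
      have hdK : dist y' y ≤ 1 / ((K : ℝ) + 1) :=
        le_of_lt (lt_of_lt_of_le hdist (min_le_right _ _))
      have hde : dist (((s, t), y') : ESrc n × ETgt n) ((s, t), y) = dist y' y := by
        simp [Prod.dist_eq, dist_self, max_eq_right dist_nonneg]
      have hmem1 : ((s, t), y') ∈ ((B ×ˢ Ici (0:ℝ)) ×ˢ Y) ∩ Metric.ball ((s, t), y) ε :=
        ⟨⟨⟨hs, ht0⟩, hy'⟩, by simpa [Metric.mem_ball, hde] using hdε⟩
      have hmem2 : ((s, t), y) ∈ ((B ×ˢ Ici (0:ℝ)) ×ˢ Y) ∩ Metric.ball ((s, t), y) ε :=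
        ⟨⟨⟨hs, ht0⟩, hy⟩, Metric.mem_ball_self hε⟩
      have hlip := hK.dist_le_mul _ hmem1 _ hmem2
      simp only [hde] at hlip
      have hK1 : (K : ℝ) * dist y' y < 1 := by
        calc (K : ℝ) * dist y' y ≤ K * (1 / ((K : ℝ) + 1)) :=
              mul_le_mul_of_nonneg_left hdK K.coe_nonneg
          _ < 1 := by
              rw [mul_one_div, div_lt_one (by positivity)]
              linarith [K.coe_nonneg]
      have habs : |c (s, t) y' - c (s, t) y| < 1 := by
        have := lt_of_le_of_lt hlip hK1
        rwa [Real.dist_eq] at this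
      have := abs_lt.mp habs
      linarith
    choose t ht0 δ hδ hball using hY
    obtain ⟨F, hF⟩ := hYc.elim_nhds_subcover' (fun y hy => Metric.ball y (δ y hy))
      (fun y hy => Metric.ball_mem_nhds _ (hδ y hy))
    obtain ⟨y₀, hy₀⟩ := hYne
    have hFne : F.Nonempty := by
      rcases Set.mem_iUnion₂.mp (hF hy₀) with ⟨y, hyF, _⟩
      exact ⟨y, hyF⟩
    refine ⟨max 0 (F.sup' hFne fun y => t y y.2), le_max_left _ _, ?_⟩
    intro y' hy' p hp
    rcases Set.mem_iUnion₂.mp (hF hy') with ⟨y, hyF, hy'ball⟩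
    have h1 : R + 1 ≤ c (s, t y y.2) y' :=
      hball y y.2 y' hy' (Metric.mem_ball.mp hy'ball)
    have hty : t y y.2 ≤ p :=
      le_trans (le_trans (Finset.le_sup' (fun y => t y.1 y.2) hyF) (le_max_right _ _)) hp
    have hp0 : (0:ℝ) ≤ p := le_trans (le_max_left _ _) hp
    have hmono := (hc.strictMonoOn s hs y' hy').monotoneOn
      (Set.mem_Ici.mpr (ht0 y y.2)) (Set.mem_Ici.mpr hp0) hty
    linarith
  -- Step B: use equicontinuity to get local uniformity in `s`.
  have stepB : ∀ s ∈ B, ∃ P : ℝ, 0 ≤ P ∧ ∃ U : Set (EuclideanSpace ℝ (Fin n)),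
      IsOpen U ∧ s ∈ U ∧ ∀ s' ∈ U ∩ B, ∀ y ∈ Y, ∀ p : ℝ, P ≤ p → R ≤ c (s', p) y := by
    intro s hs
    obtain ⟨P, hP0, hP⟩ := stepA s hs
    have hev := hc.equicontinuous s hs _ (Metric.dist_mem_uniformity one_pos)
    rw [Filter.eventually_iff, mem_nhdsWithin] at hev
    obtain ⟨U, hUo, hsU, hUsub⟩ := hev
    refine ⟨P, hP0, U, hUo, hsU, ?_⟩
    intro s' hs' y hy p hp
    have hp0 : (0:ℝ) ≤ p := le_trans hP0 hp
    have hi := hUsub ⟨hs'.1, hs'.2⟩ (⟨⟨p, Set.mem_Ici.mpr hp0⟩, ⟨y, hy⟩⟩)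
    simp only [Set.mem_setOf_eq, Real.dist_eq] at hi
    have h1 : R + 1 ≤ c (s, p) y := hP y hy p hp
    have := abs_lt.mp hi
    linarith
  choose P hP0 U hUo hsU hU using stepB
  obtain ⟨F2, hF2⟩ := hBc.elim_nhds_subcover' (fun s hs => U s hs)
    (fun s hs => (hUo s hs).mem_nhds (hsU s hs))
  obtain ⟨s₀, hs₀⟩ := hBne
  have hF2ne : F2.Nonempty := by
    rcases Set.mem_iUnion₂.mp (hF2 hs₀) with ⟨s, hsF, _⟩
    exact ⟨s, hsF⟩
  refine ⟨max 0 (F2.sup' hF2ne fun s => P s s.2), le_max_left _ _, ?_⟩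
  intro s hsB y hy p hp
  rcases Set.mem_iUnion₂.mp (hF2 hsB) with ⟨s₁, hs₁F, hsU1⟩
  exact hU s₁ s₁.2 s ⟨hsU1, hsB⟩ y hy p
    (le_trans (le_trans (Finset.le_sup' (fun s => P s.1 s.2) hs₁F) (le_max_right _ _)) hp)

/-- Under Assumption A, for `ψ ∈ C(Y)`, the average
`(1/t) ∫_0^t ψ^c(s,p) dp` tends to `+∞` as `t → +∞`, uniformly in `s ∈ B`. -/
theorem ctransform_average_tendsto_atTop_uniformly
    (n : ℕ) (hn : 1 ≤ n)
    (B : Set (EuclideanSpace ℝ (Fin n))) (hBc : IsCompact B) (hBint : (interior B).Nonempty)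
    (Y : Set (ETgt n)) (hYc : IsCompact Y) (hYne : Y.Nonempty)
    (c : ESrc n → ETgt n → ℝ) (hc : AssumptionA B Y c)
    (ψ : ETgt n → ℝ) (hψ : ContinuousOn ψ Y) :
    ∀ M : ℝ, 0 < M → ∃ T : ℝ, 0 < T ∧ ∀ t : ℝ, T ≤ t → ∀ s ∈ B,
      M ≤ (1 / t) * ∫ p in (0:ℝ)..t, ctransform c Y ψ (s, p) := by
  intro M hM
  -- bound on ψ over the compact set Y
  obtain ⟨y₀, hy₀, hymax⟩ := hYc.exists_isMaxOn hYne hψ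
  set C : ℝ := max (ψ y₀) 0 with hC
  have hC0 : 0 ≤ C := le_max_right _ _
  have hψle : ∀ y ∈ Y, ψ y ≤ C := fun y hy => le_trans (hymax hy) (le_max_left _ _)
  have hBne : B.Nonempty := hBint.mono interior_subset
  -- basic facts about the c-transform
  have hne : ∀ x : ESrc n, ((fun y => c x y - ψ y) '' Y).Nonempty := fun x => hYne.image _
  have hbdd : ∀ s ∈ B, ∀ p : ℝ, 0 ≤ p → BddBelow ((fun y => c (s, p) y - ψ y) '' Y) := by
    intro s hs p hp
    refine ⟨-C, ?_⟩
    rintro b ⟨y, hy, rfl⟩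
    have := hc.nonneg (s, p) ⟨hs, Set.mem_Ici.mpr hp⟩ y hy
    have := hψle y hy
    simp only
    linarith
  have hlb : ∀ s ∈ B, ∀ p : ℝ, 0 ≤ p → -C ≤ ctransform c Y ψ (s, p) := by
    intro s hs p hp
    refine le_csInf (hne _) ?_
    rintro b ⟨y, hy, rfl⟩
    have := hc.nonneg (s, p) ⟨hs, Set.mem_Ici.mpr hp⟩ y hy
    have := hψle y hy
    simp only
    linarith
  have hmono : ∀ s ∈ B, MonotoneOn (fun p => ctransform c Y ψ (s, p)) (Ici (0:ℝ)) := by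
    intro s hs p hp p' hp' hpp'
    refine le_csInf (hne _) ?_
    rintro b ⟨y, hy, rfl⟩
    have h1 : ctransform c Y ψ (s, p) ≤ c (s, p) y - ψ y :=
      csInf_le (hbdd s hs p hp) ⟨y, hy, rfl⟩
    have h2 : c (s, p) y ≤ c (s, p') y :=
      (hc.strictMonoOn s hs y hy).monotoneOn hp hp' hpp'
    simp only
    linarith
  -- uniform divergence of the c-transform
  obtain ⟨P, hP0, hP⟩ := aux_cost_unif hBc hBne hYc hYne hc (M + 1 + C)
  have hdvg : ∀ s ∈ B, ∀ p : ℝ, P ≤ p → M + 1 ≤ ctransform c Y ψ (s, p) := by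
    intro s hs p hp
    refine le_csInf (hne _) ?_
    rintro b ⟨y, hy, rfl⟩
    have h1 := hP s hs y hy p hp
    have h2 := hψle y hy
    simp only
    linarith
  refine ⟨max 1 (P * (M + 1 + C)), lt_of_lt_of_le one_pos (le_max_left _ _), ?_⟩
  intro t ht s hs
  have ht1 : (1:ℝ) ≤ t := le_trans (le_max_left _ _) ht
  have ht0 : (0:ℝ) < t := lt_of_lt_of_le one_pos ht1
  have htP : P * (M + 1 + C) ≤ t := le_trans (le_max_right _ _) ht
  have hPt : P ≤ t := by nlinarith
  set f : ℝ → ℝ := fun p => ctransform c Y ψ (s, p) with hf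
  have hmonot : MonotoneOn f (Icc 0 t) :=
    (hmono s hs).mono (Icc_subset_Ici_self)
  have hint1 : IntervalIntegrable f volume 0 P := by
    apply MonotoneOn.intervalIntegrable
    apply (hmono s hs).mono
    rw [Set.uIcc_of_le hP0]
    exact Icc_subset_Ici_self
  have hint2 : IntervalIntegrable f volume P t := by
    apply MonotoneOn.intervalIntegrable
    apply (hmono s hs).mono
    rw [Set.uIcc_of_le hPt]
    exact fun x hx => le_trans hP0 hx.1
  have hsplit : (∫ p in (0:ℝ)..P, f p) + ∫ p in P..t, f p = ∫ p in (0:ℝ)..t, f p :=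
    intervalIntegral.integral_add_adjacent_intervals hint1 hint2
  have hle1 : P * (-C) ≤ ∫ p in (0:ℝ)..P, f p := by
    have h1 := intervalIntegral.integral_mono_on hP0 (intervalIntegrable_const (c := -C)) hint1
      (fun x hx => hlb s hs x hx.1)
    simp only [intervalIntegral.integral_const, smul_eq_mul] at h1
    linarith
  have hle2 : (t - P) * (M + 1) ≤ ∫ p in P..t, f p := by
    have h2 := intervalIntegral.integral_mono_on hPt
      (intervalIntegrable_const (c := M + 1)) hint2
      (fun x hx => hdvg s hs x hx.1)
    simp only [intervalIntegral.integral_const, smul_eq_mul] at h2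
    linarith
  have hItot : M * t ≤ ∫ p in (0:ℝ)..t, f p := by
    rw [← hsplit]
    nlinarith
  calc M = (1 / t) * (M * t) := by field_simp
    _ ≤ (1 / t) * ∫ p in (0:ℝ)..t, f p := by
        apply mul_le_mul_of_nonneg_left hItot
        positivity
end
end

section
/- Let ε₀, ε₁ ∈ (0,1/2), X = [ε₀, 1−ε₁] × [0,∞), and Y ⊂ (0,∞)² compact and non-empty, and let c((s,p),(z,θ)) := (1/2)( z/(a√(1−s²)) − Ω a √(1−s²) )² + C_p θ ((p + p_min)/p_r)^κ, where κ = 2/7 and a, Ω, C_p, p_min, p_r are positive constants. Then c satisfies Assumption A: it is locally Lipschitz on X×Y; for every s ∈ [ε₀,1−ε₁] and (z,θ) ∈ Y the map p ↦ c((s,p),(z,θ)) is strictly increasing and unbounded on [0,∞); and, with z_max > 0 any constant such that Y ⊂ (0,z_max)×(0,∞), every function s ↦ c((s,p),(z,θ)) with p ∈ [0,∞) and (z,θ) ∈ Y is Lipschitz on [ε₀,1−ε₁] with Lipschitz constant L := z_max²/(a²ε₁²) + Ω²a², so the family {c((·,p),(z,θ)) : p ∈ [0,∞), (z,θ) ∈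 Y} is equicontinuous. -/
open MeasureTheory Set Filter Topology

noncomputable section

private lemma equiOn_of_lip {ι : Type*} {F : ι → ℝ → ℝ} {S : Set ℝ} {K : NNReal}
    (h : ∀ i, LipschitzOnWith K (F i) S) : EquicontinuousOn F S := by
  intro x₀ hx₀ U hU
  rcases Metric.mem_uniformity_dist.1 hU with ⟨ε, hε, hεU⟩
  have hδ : (0:ℝ) < ε / (K + 1) := by positivity
  filter_upwards [inter_mem (nhdsWithin_le_nhds (Metric.ball_mem_nhds x₀ hδ)) self_mem_nhdsWithin]
    with x hx i
  apply hεU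
  have h1 : dist (F i x₀) (F i x) ≤ K * dist x₀ x := (h i).dist_le_mul x₀ hx₀ x hx.2
  have h2 : dist x₀ x ≤ ε / (K + 1) := by
    rw [dist_comm]; exact le_of_lt (Metric.mem_ball.1 hx.1)
  have h3 : (K:ℝ) * (ε / (K + 1)) < ε := by
    rw [mul_div_assoc', div_lt_iff₀ (by positivity)]
    nlinarith [K.coe_nonneg]
  calc dist (F i x₀) (F i x) ≤ K * dist x₀ x := h1
    _ ≤ K * (ε / (K+1)) := by gcongr
    _ < ε := h3

private lemma lipPart {ε₀ ε₁ a Om z C zmax : ℝ} (hε₀ : 0 < ε₀) (hε₁ : 0 < ε₁)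
    (ha : 0 < a) (hz0 : 0 < z) (hz : z < zmax) :
    LipschitzOnWith (Real.toNNReal (zmax^2/(a^2*ε₁^2)+Om^2*a^2))
      (fun s : ℝ => (1/2)*(z/(a*Real.sqrt (1-s^2)) - Om*a*Real.sqrt (1-s^2))^2 + C)
      (Icc ε₀ (1-ε₁)) := by
  set L : ℝ := zmax^2/(a^2*ε₁^2)+Om^2*a^2 with hL
  set f' : ℝ → ℝ := fun s => s * (z^2/(a^2*(1-s^2)^2) - Om^2*a^2) with hf'
  apply (convex_Icc ε₀ (1-ε₁)).lipschitzOnWith_of_nnnorm_hasDerivWithin_le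
    (f' := f')
  · intro s hs
    have hs0 : 0 < s := lt_of_lt_of_le hε₀ hs.1
    have hs1 : s ≤ 1 - ε₁ := hs.2
    have hu : 0 < 1 - s^2 := by nlinarith
    have hg0 : 0 < Real.sqrt (1-s^2) := Real.sqrt_pos.2 hu
    have hg2 : Real.sqrt (1-s^2)^2 = 1 - s^2 := Real.sq_sqrt hu.le
    have d1 : HasDerivAt (fun x : ℝ => 1 - x^2) (-(2*s)) s := by
      simpa using ((hasDerivAt_pow 2 s).const_sub 1)
    have dg : HasDerivAt (fun x : ℝ => Real.sqrt (1-x^2))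
        (1/(2*Real.sqrt (1-s^2)) * (-(2*s))) s := (Real.hasDerivAt_sqrt hu.ne').comp s d1
    have dag : HasDerivAt (fun x : ℝ => a * Real.sqrt (1-x^2))
        (a * (1/(2*Real.sqrt (1-s^2)) * (-(2*s)))) s := dg.const_mul a
    have hden : a * Real.sqrt (1-s^2) ≠ 0 := by positivity
    have dz : HasDerivAt (fun x : ℝ => z / (a*Real.sqrt (1-x^2)))
        ((0 * (a*Real.sqrt (1-s^2)) - z * (a * (1/(2*Real.sqrt (1-s^2)) * (-(2*s)))))
          / (a*Real.sqrt (1-s^2))^2) s := (hasDerivAt_const s z).div dag hden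
    have dsub := dz.sub (dg.const_mul (Om*a))
    have dsq := dsub.pow 2
    have dfin := (dsq.const_mul (1/2 : ℝ)).add_const C
    have heq2 : (1/2 : ℝ) * ((2:ℕ) * (z/(a*Real.sqrt (1-s^2)) - Om*a*Real.sqrt (1-s^2))^(2-1)
        * ((0 * (a*Real.sqrt (1-s^2)) - z * (a * (1/(2*Real.sqrt (1-s^2)) * (-(2*s)))))
          / (a*Real.sqrt (1-s^2))^2 - Om*a*(1/(2*Real.sqrt (1-s^2)) * (-(2*s)))))
        = s * (z^2/(a^2*((Real.sqrt (1-s^2))^2)^2) - Om^2*a^2) := by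
      have h0 := hg0
      generalize hgd : Real.sqrt (1-s^2) = g at h0 ⊢
      norm_num
      field_simp
      ring
    have heq : (1/2 : ℝ) * ((2:ℕ) * (z/(a*Real.sqrt (1-s^2)) - Om*a*Real.sqrt (1-s^2))^(2-1)
        * ((0 * (a*Real.sqrt (1-s^2)) - z * (a * (1/(2*Real.sqrt (1-s^2)) * (-(2*s)))))
          / (a*Real.sqrt (1-s^2))^2 - Om*a*(1/(2*Real.sqrt (1-s^2)) * (-(2*s))))) = f' s := by
      rw [heq2, hg2, hf']
    rw [Pi.sub_apply, heq] at dfin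
    exact dfin.hasDerivWithinAt
  · intro s hs
    have hs0 : 0 < s := lt_of_lt_of_le hε₀ hs.1
    have hs1 : s ≤ 1 - ε₁ := hs.2
    have hu : ε₁ ≤ 1 - s^2 := by nlinarith
    have hL0 : 0 ≤ L := by positivity
    have hA0 : 0 ≤ z^2/(a^2*(1-s^2)^2) := by positivity
    have hA : z^2/(a^2*(1-s^2)^2) ≤ zmax^2/(a^2*ε₁^2) := by
      gcongr
    have habs : |f' s| ≤ L := by
      have hAz0 : (0:ℝ) ≤ zmax^2/(a^2*ε₁^2) := by positivity
      have hsA : 0 ≤ s * (z^2/(a^2*(1-s^2)^2)) := mul_nonneg hs0.le hA0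
      have hs1' : s ≤ 1 := by nlinarith
      have hB0 : (0:ℝ) ≤ Om^2*a^2 := by positivity
      rw [abs_le]
      constructor
      · simp only [hf', hL]
        nlinarith [mul_nonneg (by linarith : (0:ℝ) ≤ 1 - s) hB0]
      · simp only [hf', hL]
        nlinarith [mul_nonneg (by linarith : (0:ℝ) ≤ 1 - s) hA0, mul_nonneg hs0.le hB0]
    calc ‖f' s‖₊ = Real.toNNReal |f' s| := by
          rw [Real.toNNReal_eq_nnnorm_of_nonneg (abs_nonneg _), Real.nnnorm_abs]
      _ ≤ Real.toNNReal L := Real.toNNReal_le_toNNReal habs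

/-- The Modified-Lagrangian-Mean energy-density cost function
`c((s,p),(z,θ)) = ½ (z/(a√(1−s²)) − Ωa√(1−s²))² + C_p θ ((p+p_min)/p_r)^{2/7}`
satisfies Assumption A on `X × Y`, where `X = [ε₀, 1−ε₁] × [0,∞)` and
`Y ⊂ (0,∞)²` is compact and non-empty: it is locally Lipschitz; for each fixed `(s,(z,θ))`
it is strictly increasing and unbounded in `p`; and each function `s ↦ c((s,p),(z,θ))` is
Lipschitz on `[ε₀,1−ε₁]` with the uniform constant `L = z_max²/(a²ε₁²) + Ω²a²`, whence the
family is equicontinuous. -/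
theorem mlm_cost_satisfies_assumptionA
    (ε₀ ε₁ : ℝ) (hε₀ : ε₀ ∈ Ioo (0:ℝ) (1/2)) (hε₁ : ε₁ ∈ Ioo (0:ℝ) (1/2))
    (Y : Set (ℝ × ℝ)) (hYc : IsCompact Y) (hYne : Y.Nonempty)
    (hYpos : Y ⊆ Ioi (0:ℝ) ×ˢ Ioi (0:ℝ))
    (a Om Cp pmin pr : ℝ)
    (ha : 0 < a) (hOm : 0 < Om) (hCp : 0 < Cp) (hpmin : 0 < pmin) (hpr : 0 < pr)
    (zmax : ℝ) (hzmax : 0 < zmax) (hYz : Y ⊆ Ioo (0:ℝ) zmax ×ˢ Ioi (0:ℝ))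
    (c : (ℝ × ℝ) → (ℝ × ℝ) → ℝ)
    (hcdef : c = fun x y =>
      (1/2) * (y.1 / (a * Real.sqrt (1 - x.1^2)) - Om * a * Real.sqrt (1 - x.1^2))^2
        + Cp * y.2 * ((x.2 + pmin) / pr) ^ ((2:ℝ)/7)) :
    (∀ z ∈ ((Icc ε₀ (1 - ε₁)) ×ˢ Ici (0:ℝ)) ×ˢ Y, ∃ ε > 0, ∃ K : NNReal,
      LipschitzOnWith K (fun q : (ℝ × ℝ) × (ℝ × ℝ) => c q.1 q.2)
        ((((Icc ε₀ (1 - ε₁)) ×ˢ Ici (0:ℝ)) ×ˢ Y) ∩ Metric.ball z ε)) ∧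
    (∀ s ∈ Icc ε₀ (1 - ε₁), ∀ y ∈ Y,
      StrictMonoOn (fun t : ℝ => c (s, t) y) (Ici (0:ℝ)) ∧
      ∀ M : ℝ, ∃ t : ℝ, 0 ≤ t ∧ M ≤ c (s, t) y) ∧
    (∀ p ∈ Ici (0:ℝ), ∀ y ∈ Y,
      LipschitzOnWith (Real.toNNReal (zmax^2 / (a^2 * ε₁^2) + Om^2 * a^2))
        (fun s : ℝ => c (s, p) y) (Icc ε₀ (1 - ε₁))) ∧
    EquicontinuousOn
      (fun i : ↥(Ici (0:ℝ)) × ↥Y => fun s : ℝ => c (s, (i.1 : ℝ)) (i.2 : ℝ × ℝ))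
      (Icc ε₀ (1 - ε₁)) := by
  subst hcdef
  obtain ⟨hε₀0, hε₀h⟩ := hε₀
  obtain ⟨hε₁0, hε₁h⟩ := hε₁
  have key : ∀ p ∈ Ici (0:ℝ), ∀ y ∈ Y,
      LipschitzOnWith (Real.toNNReal (zmax^2 / (a^2 * ε₁^2) + Om^2 * a^2))
        (fun s : ℝ => (fun (x y : ℝ × ℝ) =>
          (1/2) * (y.1 / (a * Real.sqrt (1 - x.1^2)) - Om * a * Real.sqrt (1 - x.1^2))^2
            + Cp * y.2 * ((x.2 + pmin) / pr) ^ ((2:ℝ)/7)) (s, p) y) (Icc ε₀ (1 - ε₁)) := by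
    intro p hp y hy
    obtain ⟨hy1, hy2⟩ := hYz hy
    show LipschitzOnWith (Real.toNNReal (zmax^2 / (a^2 * ε₁^2) + Om^2 * a^2))
      (fun s : ℝ => (1/2) * (y.1 / (a * Real.sqrt (1 - s^2)) - Om * a * Real.sqrt (1 - s^2))^2
        + Cp * y.2 * ((p + pmin) / pr) ^ ((2:ℝ)/7)) (Icc ε₀ (1 - ε₁))
    exact lipPart hε₀0 hε₁0 ha hy1.1 hy1.2
  refine ⟨?_, ?_, key, equiOn_of_lip fun i => key i.1 i.1.2 i.2 i.2.2⟩
  · -- local Lipschitz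
    intro z hz
    obtain ⟨⟨⟨hs1, hs2⟩, hp⟩, hy⟩ := hz
    have h1s : (0:ℝ) < 1 - z.1.1^2 := by nlinarith [hs1, hs2]
    have hbase : (0:ℝ) < (z.1.2 + pmin) / pr := by
      have : (0:ℝ) ≤ z.1.2 := hp
      positivity
    have hsf : ContDiffAt ℝ 1 (fun q : (ℝ × ℝ) × (ℝ × ℝ) => q.1.1) z :=
      (contDiff_fst.comp contDiff_fst).contDiffAt
    have hin : ContDiffAt ℝ 1 (fun q : (ℝ × ℝ) × (ℝ × ℝ) => 1 - q.1.1^2) z :=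
      contDiffAt_const.sub (hsf.pow 2)
    have hG : ContDiffAt ℝ 1 (fun q : (ℝ × ℝ) × (ℝ × ℝ) => Real.sqrt (1 - q.1.1^2)) z :=
      (Real.contDiffAt_sqrt h1s.ne').comp z hin
    have hden : a * Real.sqrt (1 - z.1.1^2) ≠ 0 := by positivity
    have hz1 : ContDiffAt ℝ 1 (fun q : (ℝ × ℝ) × (ℝ × ℝ) => q.2.1) z :=
      (contDiff_fst.comp contDiff_snd).contDiffAt
    have hq2 : ContDiffAt ℝ 1 (fun q : (ℝ × ℝ) × (ℝ × ℝ) => q.2.2) z :=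
      (contDiff_snd.comp contDiff_snd).contDiffAt
    have hpc : ContDiffAt ℝ 1 (fun q : (ℝ × ℝ) × (ℝ × ℝ) => q.1.2) z :=
      (contDiff_snd.comp contDiff_fst).contDiffAt
    have hr : ContDiffAt ℝ 1
        (fun q : (ℝ × ℝ) × (ℝ × ℝ) => ((q.1.2 + pmin) / pr) ^ ((2:ℝ)/7)) z :=
      ((hpc.add contDiffAt_const).div_const pr).rpow_const_of_ne hbase.ne'
    have hcd : ContDiffAt ℝ 1 (fun q : (ℝ × ℝ) × (ℝ × ℝ) =>
        (1/2) * (q.2.1 / (a * Real.sqrt (1 - q.1.1^2)) - Om * a * Real.sqrt (1 - q.1.1^2))^2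
          + Cp * q.2.2 * ((q.1.2 + pmin) / pr) ^ ((2:ℝ)/7)) z :=
      (contDiffAt_const.mul
        (((hz1.div (contDiffAt_const.mul hG) hden).sub (contDiffAt_const.mul hG)).pow 2)).add
        ((contDiffAt_const.mul hq2).mul hr)
    obtain ⟨K, t, ht, hK⟩ := hcd.exists_lipschitzOnWith
    obtain ⟨ε, hε, hball⟩ := Metric.mem_nhds_iff.1 ht
    exact ⟨ε, hε, K, hK.mono (fun q hq => hball hq.2)⟩
  · -- monotone and unbounded in p
    intro s hs y hy
    have hy2 : (0:ℝ) < y.2 := (hYpos hy).2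
    have hCy : (0:ℝ) < Cp * y.2 := mul_pos hCp hy2
    constructor
    · intro t1 ht1 t2 ht2 h12
      show (1/2) * (y.1 / (a * Real.sqrt (1 - s^2)) - Om * a * Real.sqrt (1 - s^2))^2
            + Cp * y.2 * ((t1 + pmin) / pr) ^ ((2:ℝ)/7)
          < (1/2) * (y.1 / (a * Real.sqrt (1 - s^2)) - Om * a * Real.sqrt (1 - s^2))^2
            + Cp * y.2 * ((t2 + pmin) / pr) ^ ((2:ℝ)/7)
      have ht1' : (0:ℝ) ≤ t1 := ht1
      have hb1 : (0:ℝ) ≤ (t1 + pmin) / pr := by positivity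
      have hlt : (t1 + pmin) / pr < (t2 + pmin) / pr := by gcongr
      have hrp := Real.rpow_lt_rpow hb1 hlt (by norm_num : (0:ℝ) < 2/7)
      have := mul_lt_mul_of_pos_left hrp hCy
      linarith
    · intro M
      set A : ℝ := max (M / (Cp * y.2)) 0 with hA
      have hA0 : (0:ℝ) ≤ A := le_max_right _ _
      set u : ℝ := A ^ ((7:ℝ)/2) with hu
      have hu0 : (0:ℝ) ≤ u := Real.rpow_nonneg hA0 _
      refine ⟨max 0 (pr * u - pmin), le_max_left _ _, ?_⟩
      show M ≤ (1/2) * (y.1 / (a * Real.sqrt (1 - s^2)) - Om * a * Real.sqrt (1 - s^2))^2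
          + Cp * y.2 * ((max 0 (pr * u - pmin) + pmin) / pr) ^ ((2:ℝ)/7)
      have hge : u ≤ (max 0 (pr * u - pmin) + pmin) / pr := by
        rw [le_div_iff₀ hpr]
        nlinarith [le_max_right (0:ℝ) (pr * u - pmin)]
      have hAu : A ≤ ((max 0 (pr * u - pmin) + pmin) / pr) ^ ((2:ℝ)/7) := by
        have h1 : u ^ ((2:ℝ)/7) = A := by
          rw [hu, ← Real.rpow_mul hA0]
          norm_num
        calc A = u ^ ((2:ℝ)/7) := h1.symm
          _ ≤ _ := Real.rpow_le_rpow hu0 hge (by norm_num)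
      have hMA : M ≤ Cp * y.2 * A := by
        have h2 : M / (Cp * y.2) ≤ A := le_max_left _ _
        calc M = Cp * y.2 * (M / (Cp * y.2)) := by field_simp
          _ ≤ Cp * y.2 * A := by gcongr
      have hsq : (0:ℝ) ≤ (1/2) * (y.1 / (a * Real.sqrt (1 - s^2))
          - Om * a * Real.sqrt (1 - s^2))^2 := by positivity
      nlinarith [mul_le_mul_of_nonneg_left hAu hCy.le]
end
end
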